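/- arXiv:2410.13476 — 4 statements merged into one kernel-verified Lean document; each statement's English description precedes it below -/
import Mathlib

section
/- Let α : ℝ → ℝ² be a regular C³ plane curve defined on an open interval I ⊆ ℝ, and let f : I → ℝ be a C³ function. Define γ : I → ℝ³ by γ(t) = (α₁(t), α₂(t), f(t)), and suppose that ⟨α''(t), Jα'(t)⟩² + ‖f''(t)·α'(t) − f'(t)·α''(t)‖² ≠ 0 at t. Then the torsion τ(t) = det(γ'(t), γ''(t), γ'''(t)) / ‖γ'(t) × γ''(t)‖² of γ satisfies τ = ( f'''·⟨α'', Jα'⟩ + f''·⟨−Jα', α'''⟩ + f'·⟨Jα'', α'''⟩ ) / ( ⟨α'', Jα'⟩² + ‖f''·α' − f'·α''‖² ). -/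
open scoped RealInnerProductSpace

noncomputable section

/-- The Euclidean plane `ℝ²`. -/
abbrev E2 := EuclideanSpace ℝ (Fin 2)
/-- Euclidean 3-space `ℝ³`. -/
abbrev E3 := EuclideanSpace ℝ (Fin 3)

/-- The point `(a, b)` of `ℝ²`. -/
def mk2 (a b : ℝ) : E2 := (WithLp.equiv 2 (Fin 2 → ℝ)).symm ![a, b]
/-- The point `(a, b, c)` of `ℝ³`. -/
def mk3 (a b c : ℝ) : E3 := (WithLp.equiv 2 (Fin 3 → ℝ)).symm ![a, b, c]

/-- The complex structure `J(p₁, p₂) = (-p₂, p₁)`, rotation by `π/2` counterclockwise. -/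
def Jc (v : E2) : E2 := mk2 (-(v 1)) (v 0)
/-- The embedding `ι : ℝ² → ℝ³`, `ι(p₁, p₂) = (p₁, p₂, 0)`. -/
def emb (v : E2) : E3 := mk3 (v 0) (v 1) 0
/-- The unit vector `e₃ = (0, 0, 1)`. -/
def e₃ : E3 := mk3 0 0 1
/-- The cross product in `ℝ³`. -/
def cross3 (u v : E3) : E3 :=
  mk3 (u 1 * v 2 - u 2 * v 1) (u 2 * v 0 - u 0 * v 2) (u 0 * v 1 - u 1 * v 0)

lemma hasDerivAt_mk3' {a b c : ℝ → ℝ} {a' b' c' t : ℝ}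
    (ha : HasDerivAt a a' t) (hb : HasDerivAt b b' t) (hc : HasDerivAt c c' t) :
    HasDerivAt (fun s => mk3 (a s) (b s) (c s)) (mk3 a' b' c') t := by
  have h : HasDerivAt (fun s => ![a s, b s, c s]) ![a', b', c'] t := by
    refine hasDerivAt_pi.2 fun i => ?_
    fin_cases i
    · simpa using ha
    · simpa using hb
    · simpa using hc
  exact ((PiLp.continuousLinearEquiv 2 ℝ (fun _ : Fin 3 => ℝ)).symm.toContinuousLinearMap.hasFDerivAt.comp_hasDerivAt t h :)

lemma hasDerivAt_proj2' {g : ℝ → E2} {g' : E2} {t : ℝ} (h : HasDerivAt g g' t) (i : Fin 2) :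
    HasDerivAt (fun s => g s i) (g' i) t :=
  ((EuclideanSpace.proj i).hasFDerivAt.comp_hasDerivAt t h :)

/-- For a regular `C³` plane curve `α` on an open interval `I` and a `C³`
function `f`, the torsion `τ = det(γ', γ'', γ''') / ‖γ' × γ''‖²` of the cylindrical curve
`γ(t) = (α₁(t), α₂(t), f(t))` is given by
`τ = (f'''⟨α'', Jα'⟩ + f''⟨−Jα', α'''⟩ + f'⟨Jα'', α'''⟩) / (⟨α'', Jα'⟩² + ‖f''α' − f'α''‖²)`. -/
theorem cylindrical_curve_torsion
    (I : Set ℝ) (hIopen : IsOpen I) (hIconn : I.OrdConnected)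
    (α : ℝ → E2) (f : ℝ → ℝ) (γ : ℝ → E3)
    (hα : ContDiffOn ℝ 3 α I) (hreg : ∀ t ∈ I, deriv α t ≠ 0)
    (hf : ContDiffOn ℝ 3 f I)
    (hγ : ∀ t, γ t = mk3 (α t 0) (α t 1) (f t))
    (t : ℝ) (ht : t ∈ I)
    (hden : ⟪deriv (deriv α) t, Jc (deriv α t)⟫ ^ 2 +
        ‖deriv (deriv f) t • deriv α t - deriv f t • deriv (deriv α) t‖ ^ 2 ≠ 0) :
    ⟪cross3 (deriv γ t) (deriv (deriv γ) t), deriv (deriv (deriv γ)) t⟫ /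
        ‖cross3 (deriv γ t) (deriv (deriv γ) t)‖ ^ 2 =
      (deriv (deriv (deriv f)) t * ⟪deriv (deriv α) t, Jc (deriv α t)⟫ +
          deriv (deriv f) t * ⟪-(Jc (deriv α t)), deriv (deriv (deriv α)) t⟫ +
          deriv f t * ⟪Jc (deriv (deriv α) t), deriv (deriv (deriv α)) t⟫) /
        (⟪deriv (deriv α) t, Jc (deriv α t)⟫ ^ 2 +
          ‖deriv (deriv f) t • deriv α t - deriv f t • deriv (deriv α) t‖ ^ 2) := by
  have hα1 : ContDiffOn ℝ 2 (deriv α) I := hα.deriv_of_isOpen hIopen (by norm_num)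
  have hα2 : ContDiffOn ℝ 1 (deriv (deriv α)) I := hα1.deriv_of_isOpen hIopen (by norm_num)
  have hf1 : ContDiffOn ℝ 2 (deriv f) I := hf.deriv_of_isOpen hIopen (by norm_num)
  have hf2 : ContDiffOn ℝ 1 (deriv (deriv f)) I := hf1.deriv_of_isOpen hIopen (by norm_num)
  have hαd : ∀ s ∈ I, HasDerivAt α (deriv α s) s := fun s hs =>
    ((hα.differentiableOn (by norm_num)).differentiableAt (hIopen.mem_nhds hs)).hasDerivAt
  have hα1d : ∀ s ∈ I, HasDerivAt (deriv α) (deriv (deriv α) s) s := fun s hs =>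
    ((hα1.differentiableOn (by norm_num)).differentiableAt (hIopen.mem_nhds hs)).hasDerivAt
  have hα2d : ∀ s ∈ I, HasDerivAt (deriv (deriv α)) (deriv (deriv (deriv α)) s) s := fun s hs =>
    ((hα2.differentiableOn (by norm_num)).differentiableAt (hIopen.mem_nhds hs)).hasDerivAt
  have hfd : ∀ s ∈ I, HasDerivAt f (deriv f s) s := fun s hs =>
    ((hf.differentiableOn (by norm_num)).differentiableAt (hIopen.mem_nhds hs)).hasDerivAt
  have hf1d : ∀ s ∈ I, HasDerivAt (deriv f) (deriv (deriv f) s) s := fun s hs =>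
    ((hf1.differentiableOn (by norm_num)).differentiableAt (hIopen.mem_nhds hs)).hasDerivAt
  have hf2d : ∀ s ∈ I, HasDerivAt (deriv (deriv f)) (deriv (deriv (deriv f)) s) s := fun s hs =>
    ((hf2.differentiableOn (by norm_num)).differentiableAt (hIopen.mem_nhds hs)).hasDerivAt
  have hγd : ∀ s ∈ I, HasDerivAt γ (mk3 (deriv α s 0) (deriv α s 1) (deriv f s)) s := by
    intro s hs
    have h := hasDerivAt_mk3' (hasDerivAt_proj2' (hαd s hs) 0)
      (hasDerivAt_proj2' (hαd s hs) 1) (hfd s hs)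
    rw [show γ = fun u => mk3 (α u 0) (α u 1) (f u) from funext hγ]
    exact h
  have hd1 : ∀ s ∈ I, deriv γ s = mk3 (deriv α s 0) (deriv α s 1) (deriv f s) :=
    fun s hs => (hγd s hs).deriv
  have hγ2 : ∀ s ∈ I, HasDerivAt (deriv γ)
      (mk3 (deriv (deriv α) s 0) (deriv (deriv α) s 1) (deriv (deriv f) s)) s := by
    intro s hs
    have h := hasDerivAt_mk3' (hasDerivAt_proj2' (hα1d s hs) 0)
      (hasDerivAt_proj2' (hα1d s hs) 1) (hf1d s hs)
    refine h.congr_of_eventuallyEq ?_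
    filter_upwards [hIopen.mem_nhds hs] with u hu using hd1 u hu
  have hd2 : ∀ s ∈ I, deriv (deriv γ) s =
      mk3 (deriv (deriv α) s 0) (deriv (deriv α) s 1) (deriv (deriv f) s) :=
    fun s hs => (hγ2 s hs).deriv
  have hγ3 : HasDerivAt (deriv (deriv γ))
      (mk3 (deriv (deriv (deriv α)) t 0) (deriv (deriv (deriv α)) t 1)
        (deriv (deriv (deriv f)) t)) t := by
    have h := hasDerivAt_mk3' (hasDerivAt_proj2' (hα2d t ht) 0)
      (hasDerivAt_proj2' (hα2d t ht) 1) (hf2d t ht)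
    refine h.congr_of_eventuallyEq ?_
    filter_upwards [hIopen.mem_nhds ht] with u hu using hd2 u hu
  rw [hd1 t ht, hd2 t ht, hγ3.deriv, ← real_inner_self_eq_norm_sq, ← real_inner_self_eq_norm_sq]
  simp only [cross3, Jc, mk2, mk3, PiLp.inner_apply, RCLike.inner_apply, conj_trivial,
    Fin.sum_univ_two, Fin.sum_univ_three, WithLp.equiv_symm_apply, PiLp.toLp_apply,
    Matrix.cons_val_zero, Matrix.cons_val_one, Matrix.head_cons, Matrix.cons_val_two,
    Matrix.tail_cons, PiLp.neg_apply, PiLp.sub_apply, PiLp.smul_apply, smul_eq_mul]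
  congr 1 <;> ring
end
end

section
/- Let α : ℝ → ℝ² be a regular C³ plane curve on an open interval I with signed curvature K, let f : I → ℝ be of class C², and define γ : I → ℝ³ by γ(t) = (α₁(t), α₂(t), f(t)). Then for every t ∈ I, ‖γ'(t) × γ''(t)‖ = √( ṡ(t)⁶ K(t)² + ‖f''(t)·α'(t) − f'(t)·α''(t)‖² ), where ṡ(t) = ‖α'(t)‖. -/
open scoped RealInnerProductSpace

noncomputable section

private lemma proj_deriv {n : ℕ} (F : ℝ → EuclideanSpace ℝ (Fin n)) {t : ℝ}
    (hF : DifferentiableAt ℝ F t) (i : Fin n) :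
    deriv (fun s => F s i) t = deriv F t i := by
  have h := ((EuclideanSpace.proj (𝕜 := ℝ) i).hasFDerivAt.comp_hasDerivAt t hF.hasDerivAt)
  have h2 := h.deriv
  simp at h2
  exact h2

private lemma mk3_apply (a b c : ℝ) :
    mk3 a b c 0 = a ∧ mk3 a b c 1 = b ∧ mk3 a b c 2 = c := by
  refine ⟨?_, ?_, ?_⟩ <;> simp [mk3, PiLp.toLp_apply]

private lemma norm_mk3 (a b c : ℝ) : ‖mk3 a b c‖ = Real.sqrt (a ^ 2 + b ^ 2 + c ^ 2) := by
  rw [EuclideanSpace.norm_eq]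
  congr 1
  simp [Fin.sum_univ_three, (mk3_apply a b c).1, (mk3_apply a b c).2.1, (mk3_apply a b c).2.2,
    sq_abs]

private lemma norm_sq_E2 (x : E2) : ‖x‖ ^ 2 = x 0 ^ 2 + x 1 ^ 2 := by
  rw [EuclideanSpace.norm_eq, Real.sq_sqrt (by positivity)]
  simp [Fin.sum_univ_two, sq_abs]

/-- For a regular `C³` plane curve `α` with signed curvature `K` and a `C²`
function `f`, the cylindrical curve `γ(t) = (α₁(t), α₂(t), f(t))` satisfies
`‖γ' × γ''‖ = √(ṡ⁶K² + ‖f''·α' − f'·α''‖²)` where `ṡ = ‖α'‖`. -/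
theorem cylindrical_curve_cross_product_norm
    (I : Set ℝ) (hIopen : IsOpen I) (hIconn : I.OrdConnected)
    (α : ℝ → E2) (f : ℝ → ℝ) (γ : ℝ → E3) (K : ℝ → ℝ)
    (hα : ContDiffOn ℝ 3 α I) (hreg : ∀ t ∈ I, deriv α t ≠ 0)
    (hK : ∀ t ∈ I, K t = ⟪deriv (deriv α) t, Jc (deriv α t)⟫ / ‖deriv α t‖ ^ 3)
    (hf : ContDiffOn ℝ 2 f I)
    (hγ : ∀ t, γ t = mk3 (α t 0) (α t 1) (f t)) :
    ∀ t ∈ I,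
      ‖cross3 (deriv γ t) (deriv (deriv γ) t)‖ =
        Real.sqrt (‖deriv α t‖ ^ 6 * K t ^ 2 +
          ‖deriv (deriv f) t • deriv α t - deriv f t • deriv (deriv α) t‖ ^ 2) := by
  intro t ht
  have hmem : I ∈ nhds t := hIopen.mem_nhds ht
  -- γ is C²
  have hγC : ContDiffOn ℝ 2 γ I := by
    rw [contDiffOn_euclidean]
    intro i
    fin_cases i
    · refine (((EuclideanSpace.proj (𝕜 := ℝ) (0 : Fin 2)).contDiff.comp_contDiffOn
        (hα.of_le (by norm_num))).congr ?_)
      intro s _; simp [hγ s, (mk3_apply _ _ _).1]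
    · refine (((EuclideanSpace.proj (𝕜 := ℝ) (1 : Fin 2)).contDiff.comp_contDiffOn
        (hα.of_le (by norm_num))).congr ?_)
      intro s _; simp [hγ s, (mk3_apply _ _ _).2.1]
    · refine (hf.congr ?_)
      intro s _; simp [hγ s, (mk3_apply _ _ _).2.2]
  -- differentiability facts
  have hαdI : ∀ s ∈ I, DifferentiableAt ℝ α s := fun s hs =>
    (hα.differentiableOn (by norm_num)).differentiableAt (hIopen.mem_nhds hs)
  have hα' : ContDiffOn ℝ 2 (deriv α) I := hα.deriv_of_isOpen hIopen (by norm_num)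
  have hα'd : DifferentiableAt ℝ (deriv α) t :=
    (hα'.differentiableOn (by norm_num)).differentiableAt hmem
  have hγdI : ∀ s ∈ I, DifferentiableAt ℝ γ s := fun s hs =>
    (hγC.differentiableOn (by norm_num)).differentiableAt (hIopen.mem_nhds hs)
  have hγ' : ContDiffOn ℝ 1 (deriv γ) I := hγC.deriv_of_isOpen hIopen (by norm_num)
  have hγ'd : DifferentiableAt ℝ (deriv γ) t :=
    (hγ'.differentiableOn (by norm_num)).differentiableAt hmem
  have hfdI : ∀ s ∈ I, DifferentiableAt ℝ f s := fun s hs =>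
    (hf.differentiableOn (by norm_num)).differentiableAt (hIopen.mem_nhds hs)
  -- first-derivative components on I
  have comp0 : (fun s => γ s 0) = fun s => α s 0 := funext fun s => by
    simp [hγ s, (mk3_apply _ _ _).1]
  have comp1 : (fun s => γ s 1) = fun s => α s 1 := funext fun s => by
    simp [hγ s, (mk3_apply _ _ _).2.1]
  have comp2 : (fun s => γ s 2) = f := funext fun s => by
    simp [hγ s, (mk3_apply _ _ _).2.2]
  have d0 : ∀ s ∈ I, deriv γ s 0 = deriv α s 0 := fun s hs => by
    rw [← proj_deriv γ (hγdI s hs) 0, comp0, proj_deriv α (hαdI s hs) 0]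
  have d1 : ∀ s ∈ I, deriv γ s 1 = deriv α s 1 := fun s hs => by
    rw [← proj_deriv γ (hγdI s hs) 1, comp1, proj_deriv α (hαdI s hs) 1]
  have d2 : ∀ s ∈ I, deriv γ s 2 = deriv f s := fun s hs => by
    rw [← proj_deriv γ (hγdI s hs) 2, comp2]
  -- second-derivative components at t
  have dd0 : deriv (deriv γ) t 0 = deriv (deriv α) t 0 := by
    rw [← proj_deriv (deriv γ) hγ'd 0, ← proj_deriv (deriv α) hα'd 0]
    apply Filter.EventuallyEq.deriv_eq
    filter_upwards [hmem] with s hs using d0 s hs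
  have dd1 : deriv (deriv γ) t 1 = deriv (deriv α) t 1 := by
    rw [← proj_deriv (deriv γ) hγ'd 1, ← proj_deriv (deriv α) hα'd 1]
    apply Filter.EventuallyEq.deriv_eq
    filter_upwards [hmem] with s hs using d1 s hs
  have dd2 : deriv (deriv γ) t 2 = deriv (deriv f) t := by
    rw [← proj_deriv (deriv γ) hγ'd 2]
    apply Filter.EventuallyEq.deriv_eq
    filter_upwards [hmem] with s hs using d2 s hs
  -- abbreviations
  set A0 := deriv α t 0 with hA0
  set A1 := deriv α t 1 with hA1
  set B0 := deriv (deriv α) t 0 with hB0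
  set B1 := deriv (deriv α) t 1 with hB1
  set F1 := deriv f t with hF1
  set F2 := deriv (deriv f) t with hF2
  -- LHS
  have hL : ‖cross3 (deriv γ t) (deriv (deriv γ) t)‖ =
      Real.sqrt ((A1 * F2 - F1 * B1) ^ 2 + (F1 * B0 - A0 * F2) ^ 2 + (A0 * B1 - A1 * B0) ^ 2) := by
    rw [cross3, norm_mk3, d0 t ht, d1 t ht, d2 t ht, dd0, dd1, dd2]
  -- curvature term
  have hsne : ‖deriv α t‖ ≠ 0 := norm_ne_zero_iff.2 (hreg t ht)
  have hinner : ⟪deriv (deriv α) t, Jc (deriv α t)⟫ = A0 * B1 - A1 * B0 := by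
    simp only [PiLp.inner_apply, RCLike.inner_apply, conj_trivial, Fin.sum_univ_two]
    simp [Jc, mk2, PiLp.toLp_apply]
    ring
  have hKterm : ‖deriv α t‖ ^ 6 * K t ^ 2 = (A0 * B1 - A1 * B0) ^ 2 := by
    rw [hK t ht, hinner]
    field_simp
  -- w term
  have hw : ‖F2 • deriv α t - F1 • deriv (deriv α) t‖ ^ 2 =
      (F2 * A0 - F1 * B0) ^ 2 + (F2 * A1 - F1 * B1) ^ 2 := by
    rw [norm_sq_E2]
    simp [smul_eq_mul]
    rfl
  rw [hL, hKterm, hw]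
  congr 1
  ring
end
end

section
/- Let α : ℝ → ℝ² be a regular C³ plane curve on an open interval I with signed curvature K(t) ≠ 0, let f : I → ℝ be of class C², and define γ : I → ℝ³ by γ(t) = (α₁(t), α₂(t), f(t)). Then the unit binormal vector B(t) = (γ'(t) × γ''(t)) / ‖γ'(t) × γ''(t)‖ of γ satisfies B(t) = ( −ι(J(f''(t)·α'(t) − f'(t)·α''(t))) + ṡ(t)³ K(t)·e₃ ) / √( ṡ(t)⁶ K(t)² + ‖f''(t)·α'(t) − f'(t)·α''(t)‖² ), where ṡ(t) = ‖α'(t)‖, ι : ℝ² → ℝ³ is the embedding ι(p₁,p₂) = (p₁,p₂,0), and e₃ = (0,0,1). -/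
open scoped RealInnerProductSpace

noncomputable section

lemma hasDerivAt_coord {n : ℕ} {α : ℝ → EuclideanSpace ℝ (Fin n)} {v : EuclideanSpace ℝ (Fin n)}
    {t : ℝ} (h : HasDerivAt α v t) (i : Fin n) : HasDerivAt (fun s => α s i) (v i) t := by
  have := (EuclideanSpace.proj i (𝕜 := ℝ)).hasFDerivAt.comp_hasDerivAt t h
  simp at this; exact this

lemma mk3_decomp (a b c : ℝ) : mk3 a b c = a • EuclideanSpace.single 0 (1:ℝ)
    + b • EuclideanSpace.single 1 (1:ℝ) + c • EuclideanSpace.single 2 (1:ℝ) := by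
  ext i
  fin_cases i <;> simp [mk3]


/-- For a regular `C³` plane curve `α` with nonvanishing signed curvature `K`
and a `C²` function `f`, the unit binormal `B = (γ' × γ'')/‖γ' × γ''‖` of the cylindrical curve
`γ(t) = (α₁(t), α₂(t), f(t))` satisfies
`B = (−ι(J(f''α' − f'α'')) + ṡ³K·e₃)/√(ṡ⁶K² + ‖f''α' − f'α''‖²)` where `ṡ = ‖α'‖`. -/
theorem cylindrical_curve_binormal
    (I : Set ℝ) (hIopen : IsOpen I) (hIconn : I.OrdConnected)
    (α : ℝ → E2) (f : ℝ → ℝ) (γ : ℝ → E3) (K : ℝ → ℝ)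
    (hα : ContDiffOn ℝ 3 α I) (hreg : ∀ t ∈ I, deriv α t ≠ 0)
    (hK : ∀ t ∈ I, K t = ⟪deriv (deriv α) t, Jc (deriv α t)⟫ / ‖deriv α t‖ ^ 3)
    (hK0 : ∀ t ∈ I, K t ≠ 0)
    (hf : ContDiffOn ℝ 2 f I)
    (hγ : ∀ t, γ t = mk3 (α t 0) (α t 1) (f t)) :
    ∀ t ∈ I,
      ‖cross3 (deriv γ t) (deriv (deriv γ) t)‖⁻¹ • cross3 (deriv γ t) (deriv (deriv γ) t) =
        (Real.sqrt (‖deriv α t‖ ^ 6 * K t ^ 2 +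
            ‖deriv (deriv f) t • deriv α t - deriv f t • deriv (deriv α) t‖ ^ 2))⁻¹ •
          (-(emb (Jc (deriv (deriv f) t • deriv α t - deriv f t • deriv (deriv α) t))) +
            (‖deriv α t‖ ^ 3 * K t) • e₃) := by
  have hα' : ContDiffOn ℝ 2 (deriv α) I := hα.deriv_of_isOpen hIopen (by norm_num)
  have hf' : ContDiffOn ℝ 1 (deriv f) I := hf.deriv_of_isOpen hIopen (by norm_num)
  have hγd : ∀ s ∈ I, HasDerivAt γ (mk3 (deriv α s 0) (deriv α s 1) (deriv f s)) s := by
    intro s hs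
    have hαs : HasDerivAt α (deriv α s) s :=
      ((hα.differentiableOn (by norm_num)).differentiableAt (hIopen.mem_nhds hs)).hasDerivAt
    have hfs : HasDerivAt f (deriv f s) s :=
      ((hf.differentiableOn (by norm_num)).differentiableAt (hIopen.mem_nhds hs)).hasDerivAt
    have hfun : γ = fun s => (α s 0) • EuclideanSpace.single 0 (1:ℝ)
        + (α s 1) • EuclideanSpace.single 1 (1:ℝ) + (f s) • EuclideanSpace.single 2 (1:ℝ) :=
      funext fun s => by rw [hγ s, mk3_decomp]
    rw [hfun, mk3_decomp]
    exact (((hasDerivAt_coord hαs 0).smul_const _).add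
      ((hasDerivAt_coord hαs 1).smul_const _)).add (hfs.smul_const _)
  intro t ht
  have hdγt : deriv γ t = mk3 (deriv α t 0) (deriv α t 1) (deriv f t) := (hγd t ht).deriv
  have hγdd : HasDerivAt (deriv γ)
      (mk3 (deriv (deriv α) t 0) (deriv (deriv α) t 1) (deriv (deriv f) t)) t := by
    have hαs : HasDerivAt (deriv α) (deriv (deriv α) t) t :=
      ((hα'.differentiableOn (by norm_num)).differentiableAt (hIopen.mem_nhds ht)).hasDerivAt
    have hfs : HasDerivAt (deriv f) (deriv (deriv f) t) t :=
      ((hf'.differentiableOn (by norm_num)).differentiableAt (hIopen.mem_nhds ht)).hasDerivAt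
    have hg : HasDerivAt (fun s => mk3 (deriv α s 0) (deriv α s 1) (deriv f s))
        (mk3 (deriv (deriv α) t 0) (deriv (deriv α) t 1) (deriv (deriv f) t)) t := by
      simp only [mk3_decomp]
      exact (((hasDerivAt_coord hαs 0).smul_const _).add
        ((hasDerivAt_coord hαs 1).smul_const _)).add (hfs.smul_const _)
    refine hg.congr_of_eventuallyEq ?_
    filter_upwards [hIopen.mem_nhds ht] with s hs using (hγd s hs).deriv
  have hddγt : deriv (deriv γ) t = mk3 (deriv (deriv α) t 0) (deriv (deriv α) t 1)
      (deriv (deriv f) t) := hγdd.deriv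
  set u := deriv α t with hu
  set w := deriv (deriv α) t with hw
  set f1 := deriv f t
  set f2 := deriv (deriv f) t
  have hns : ‖u‖ ≠ 0 := norm_ne_zero_iff.2 (hreg t ht)
  have hKip : ‖u‖ ^ 3 * K t = ⟪w, Jc u⟫ := by
    rw [hK t ht, ← hu, ← hw]; field_simp
  have hip : ⟪w, Jc u⟫ = w 0 * (-(u 1)) + w 1 * u 0 := by
    simp [Jc, mk2, PiLp.inner_apply, Fin.sum_univ_two, RCLike.inner_apply]; ring
  have hwc : ∀ i, (f2 • u - f1 • w) i = f2 * u i - f1 * w i := by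
    intro i; simp
  have hvec : cross3 (mk3 (u 0) (u 1) f1) (mk3 (w 0) (w 1) f2) =
      -(emb (Jc (f2 • u - f1 • w))) + (‖u‖ ^ 3 * K t) • e₃ := by
    rw [hKip, hip]
    ext i
    fin_cases i <;>
      simp [cross3, mk3, emb, Jc, mk2, e₃, hwc] <;> ring
  have hnormsq : ∀ (x : E2), ‖x‖ ^ 2 = x 0 ^ 2 + x 1 ^ 2 := by
    intro x
    rw [EuclideanSpace.norm_eq, Real.sq_sqrt (by positivity)]
    simp [Fin.sum_univ_two, Real.norm_eq_abs, sq_abs]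
  have hnorm : Real.sqrt (‖u‖ ^ 6 * K t ^ 2 + ‖f2 • u - f1 • w‖ ^ 2) =
      ‖cross3 (mk3 (u 0) (u 1) f1) (mk3 (w 0) (w 1) f2)‖ := by
    rw [EuclideanSpace.norm_eq (cross3 (mk3 (u 0) (u 1) f1) (mk3 (w 0) (w 1) f2))]
    congr 1
    have h6 : ‖u‖ ^ 6 * K t ^ 2 = (‖u‖ ^ 3 * K t) ^ 2 := by ring
    rw [h6, hKip, hip, hnormsq, hwc, hwc]
    simp [cross3, mk3, Fin.sum_univ_three, Real.norm_eq_abs, sq_abs]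
    ring
  rw [hdγt, hddγt, hnorm, hvec]
end
end

section
/- Let a, b, n > 0 be constants and let γ : ℝ → ℝ³ be the toroidal helix γ(t) = ( (a + b cos(nt)) cos t, (a + b cos(nt)) sin t, b sin(nt) ). At every t where the curvature κ and torsion τ of γ are nonzero and the denominator D(t) below is nonzero, the focal curve C_γ(t) = γ(t) + (1/κ(t))N(t) + (−κ'(t)/(‖γ'(t)‖κ(t)²τ(t)))B(t) equals ( x_β(t), y_β(t), f̃(t) ), where, with D(t) = (4a²(n²−1) − b²(8n⁴+13n²+3))cos(nt) + b(4a(n⁴−1) − 4a(2n²+1)cos(2nt) + b(n²−1)cos(3nt)): x_β(t) = 4abn²( cos t·(a(n²−1) − b(2n²+1)cos(nt)) + 3bn sin t sin(nt) ) / D(t); y_β(t) = 4abn²( sin t·(a(n²−1) − b(2n²+1)cos(nt)) − 3bn cos t sin(nt) ) / D(t); f̃(t) = 2a sin(nt)( −2a²(n²−1) + 4ab(2n²+1)cos(nt) − b²(n²−1)cos(2nt) + b²(11n²+1) ) / D(t). -/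
open scoped RealInnerProductSpace

noncomputable section

@[simp] lemma mk3_c0 (x y z : ℝ) : mk3 x y z 0 = x := rfl
@[simp] lemma mk3_c1 (x y z : ℝ) : mk3 x y z 1 = y := rfl
@[simp] lemma mk3_c2 (x y z : ℝ) : mk3 x y z 2 = z := rfl
lemma mk3_add (x y z x' y' z' : ℝ) : mk3 x y z + mk3 x' y' z' = mk3 (x+x') (y+y') (z+z') := by
  refine PiLp.ext fun i => ?_
  fin_cases i <;> simp [mk3]
lemma smul_mk3 (r x y z : ℝ) : r • mk3 x y z = mk3 (r*x) (r*y) (r*z) := by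
  refine PiLp.ext fun i => ?_
  fin_cases i <;> simp [mk3]
lemma mk3_ext {x y z x' y' z' : ℝ} (h1 : x = x') (h2 : y = y') (h3 : z = z') :
    mk3 x y z = mk3 x' y' z' := by rw [h1, h2, h3]
lemma norm_mk3_s13 (x y z : ℝ) : ‖mk3 x y z‖ = Real.sqrt (x^2+y^2+z^2) := by
  rw [EuclideanSpace.norm_eq]
  simp [Fin.sum_univ_three, Real.norm_eq_abs, sq_abs]
lemma inner_mk3 (x y z x' y' z' : ℝ) : ⟪mk3 x y z, mk3 x' y' z'⟫ = x*x'+y*y'+z*z' := by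
  simp [PiLp.inner_apply, Fin.sum_univ_three, RCLike.inner_apply, conj_trivial]
  ring
lemma cross3_smul (r s : ℝ) (u v : E3) :
    cross3 (r • u) (s • v) = (r*s) • cross3 u v := by
  unfold cross3
  rw [smul_mk3]
  refine mk3_ext ?_ ?_ ?_ <;> (simp only [PiLp.smul_apply, smul_eq_mul]; ring)
lemma hasDerivAt_mk3 {x y z : ℝ → ℝ} {x' y' z' t : ℝ}
    (hx : HasDerivAt x x' t) (hy : HasDerivAt y y' t) (hz : HasDerivAt z z' t) :
    HasDerivAt (fun u => mk3 (x u) (y u) (z u)) (mk3 x' y' z') t := by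
  have h : HasDerivAt (fun u => (![x u, y u, z u] : Fin 3 → ℝ)) ![x', y', z'] t := by
    rw [hasDerivAt_pi]
    intro i
    fin_cases i <;> [exact hx; exact hy; exact hz]
  exact ((EuclideanSpace.equiv (Fin 3) ℝ).symm.hasFDerivAt.comp_hasDerivAt t h :)
lemma hasDerivAt_cosmul (n u : ℝ) :
    HasDerivAt (fun v => Real.cos (n*v)) (-(n * Real.sin (n*u))) u := by
  have h := (Real.hasDerivAt_cos (n*u)).comp u ((hasDerivAt_id u).const_mul n)
  exact h.congr_deriv (by ring)
lemma hasDerivAt_sinmul (n u : ℝ) :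
    HasDerivAt (fun v => Real.sin (n*v)) (n * Real.cos (n*u)) u := by
  have h := (Real.hasDerivAt_sin (n*u)).comp u ((hasDerivAt_id u).const_mul n)
  exact h.congr_deriv (by ring)
lemma HasDerivAt.congr_d {f : ℝ → ℝ} {d d' t : ℝ} (h : HasDerivAt f d t) (e : d' = d) :
    HasDerivAt f d' t := e ▸ h
lemma c1_clean (sw sq W Q : ℝ) (hsw : sw^2 = W) (hsq : sq^2 = Q)
    (hsw0 : 0 < sw) (hsq0 : 0 < sq) :
    (sw/sq^3)⁻¹ * (sw⁻¹ * sq⁻¹) = Q/W := by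
  have h1 : sw ≠ 0 := ne_of_gt hsw0
  have h2 : sq ≠ 0 := ne_of_gt hsq0
  subst hsw hsq
  field_simp
lemma c2_clean (sw sq W Q Wp Qp det c2 : ℝ) (hsw : sw^2 = W) (hsq : sq^2 = Q)
    (hsw0 : 0 < sw) (hsq0 : 0 < sq) (hdet : det ≠ 0)
    (hc2 : c2 = -((Wp/(2*sw)*sq^3 - sw*(3*sq^2*(Qp/(2*sq))))/(sq^3)^2) /
      (sq * (sw/sq^3)^2 * (det/W))) :
    c2 * sw⁻¹ = (3 * W * Qp - Wp * Q) / (2 * W * det) := by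
  have h1 : sw ≠ 0 := ne_of_gt hsw0
  have h2 : sq ≠ 0 := ne_of_gt hsq0
  subst hc2 hsw hsq
  field_simp
  ring
lemma key {g x w Nm Q W Qp Wp det D bn : ℝ} (hW : W ≠ 0) (hdet : det ≠ 0) (hD : D ≠ 0)
    (hbnD : bn * D = -(4*det))
    (hpoly : 2*W*det*g + 2*Q*det*x + (3*W*Qp - Wp*Q)*w = -(bn/2)*(W*Nm)) :
    g + Q / W * x + (3 * W * Qp - Wp * Q) / (2 * W * det) * w = Nm / D := by
  field_simp
  linear_combination D*hpoly - (W*Nm/2)*hbnD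
lemma HasDerivAt.congr_f {f g : ℝ → E3} {d : E3} {t : ℝ} (h : HasDerivAt f d t)
    (e : f = g) : HasDerivAt g d t := e ▸ h
lemma HasDerivAt.congr_fr {f g : ℝ → ℝ} {d t : ℝ} (h : HasDerivAt f d t)
    (e : f = g) : HasDerivAt g d t := e ▸ h

set_option maxRecDepth 100000 in
set_option maxHeartbeats 10000000 in
lemma aux_F0 (a b n c s cn sn : ℝ) (hs : s ^ 2 + c ^ 2 = 1)
    (hsn : sn ^ 2 + cn ^ 2 = 1) :
    2*((a^4 + 2*a^3*b*n^2*cn + 4*a^3*b*cn + a^2*b^2*n^4 + 3*a^2*b^2*n^2*cn^2 + 4*a^2*b^2*n^2 + 6*a^2*b^2*cn^2 + 4*a*b^3*n^4*cn + 8*a*b^3*n^2*cn + 4*a*b^3*cn^3 + b^4*n^6 - b^4*n^4*cn^2 + 4*b^4*n^4 - b^4*n^2*cn^4 + 4*b^4*n^2*cn^2 + b^4*cn^4))*((-a^2*b*n^3*cn + a^2*b*n*cn - a*b^2*n^5 + 4*a*b^2*n^3*cn^2 - 2*a*b^2*n^3 + 2*a*b^2*n*cn^2 + 2*b^3*n^5*cn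 - b^3*n^3*cn^3 + 4*b^3*n^3*cn + b^3*n*cn^3))*((a + b * cn) * c) + 2*((a^2 + 2*a*b*cn + b^2*n^2 + b^2*cn^2))*((-a^2*b*n^3*cn + a^2*b*n*cn - a*b^2*n^5 + 4*a*b^2*n^3*cn^2 - 2*a*b^2*n^3 + 2*a*b^2*n*cn^2 + 2*b^3*n^5*cn - b^3*n^3*cn^3 + 4*b^3*n^3*cn + b^3*n*cn^3))*((-a^3*c - a^2*b*n^2*c*cn + a^2*b*n*s*sn - 3*a^2*b*c*cn - a*b^2*n^2*c*cn^2 - 2*a*b^2*n^2*c + 2*a*b^2*n*s*cn*sn - 3*a*b^2*c*cn^2 - b^3*n^4*c*cn + 2*b^3*n^3*s*sn - 2*b^3*n^2*c*cn + b^3*n*s*cn^2*sn - b^3*c*cn^3)) + (3*((a^4 + 2*a^3*b*n^2*cn + 4*a^3*b*cn + a^2*b^2*n^4 + 3*a^2*b^2*n^2*cn^2 + 4*a^2*b^2*n^2 + 6*a^2*b^2*cn^2 + 4*a*b^3*n^4*cn + 8*a*b^3*n^2*cn + 4*a*b^3*cn^3 + b^4*n^6 - b^4*n^4*cn^2 +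 4*b^4*n^4 - b^4*n^2*cn^4 + 4*b^4*n^2*cn^2 + b^4*cn^4))*((-2*a*b*n*sn - 2*b^2*n*cn*sn)) - ((-2*a^3*b*n^3*sn - 4*a^3*b*n*sn - 6*a^2*b^2*n^3*cn*sn - 12*a^2*b^2*n*cn*sn - 4*a*b^3*n^5*sn - 8*a*b^3*n^3*sn - 12*a*b^3*n*cn^2*sn + 2*b^4*n^5*cn*sn + 4*b^4*n^3*cn^3*sn - 8*b^4*n^3*cn*sn - 4*b^4*n*cn^3*sn))*((a^2 + 2*a*b*cn + b^2*n^2 + b^2*cn^2)))*((-a*b*n^2*c*sn + a*b*n*s*cn + b^2*n^3*s + b^2*n^2*c*cn*sn + b^2*n*s*cn^2)) =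
      -(b*n/2)*(((a^4 + 2*a^3*b*n^2*cn + 4*a^3*b*cn + a^2*b^2*n^4 + 3*a^2*b^2*n^2*cn^2 + 4*a^2*b^2*n^2 + 6*a^2*b^2*cn^2 + 4*a*b^3*n^4*cn + 8*a*b^3*n^2*cn + 4*a*b^3*cn^3 + b^4*n^6 - b^4*n^4*cn^2 + 4*b^4*n^4 - b^4*n^2*cn^4 + 4*b^4*n^2*cn^2 + b^4*cn^4))*(4 * a * b * n ^ 2 * (c * (a * (n ^ 2 - 1) - b * (2 * n ^ 2 + 1) * cn) + 3 * b * n * s * sn))) := by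
  linear_combination ((-2*a^6*b^2*n^5*c + 2*a^6*b^2*n^3*c + 4*a^5*b^3*n^5*c*cn + 8*a^5*b^3*n^3*c*cn + 14*a^4*b^4*n^5*c*cn^2 + 12*a^4*b^4*n^5*c + 10*a^4*b^4*n^3*c*cn^2 + 18*a^3*b^5*n^7*c*cn + 24*a^3*b^5*n^5*c*cn + 2*a^2*b^6*n^9*c + 16*a^2*b^6*n^7*c - 14*a^2*b^6*n^5*c*cn^4 - 10*a^2*b^6*n^3*c*cn^4 + 6*a*b^7*n^9*c*cn - 18*a*b^7*n^7*c*cn^3 - 4*a*b^7*n^5*c*cn^5 - 24*a*b^7*n^5*c*cn^3 - 8*a*b^7*n^3*c*cn^5 - 8*b^8*n^9*c*cn^2 - 16*b^8*n^7*c*cn^2 + 2*b^8*n^5*c*cn^6 - 12*b^8*n^5*c*cn^4 - 2*b^8*n^3*c*cn^6)) * hsn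

set_option maxRecDepth 100000 in
set_option maxHeartbeats 10000000 in
lemma aux_F1 (a b n c s cn sn : ℝ) (hs : s ^ 2 + c ^ 2 = 1)
    (hsn : sn ^ 2 + cn ^ 2 = 1) :
    2*((a^4 + 2*a^3*b*n^2*cn + 4*a^3*b*cn + a^2*b^2*n^4 + 3*a^2*b^2*n^2*cn^2 + 4*a^2*b^2*n^2 + 6*a^2*b^2*cn^2 + 4*a*b^3*n^4*cn + 8*a*b^3*n^2*cn + 4*a*b^3*cn^3 + b^4*n^6 - b^4*n^4*cn^2 + 4*b^4*n^4 - b^4*n^2*cn^4 + 4*b^4*n^2*cn^2 + b^4*cn^4))*((-a^2*b*n^3*cn + a^2*b*n*cn - a*b^2*n^5 + 4*a*b^2*n^3*cn^2 - 2*a*b^2*n^3 + 2*a*b^2*n*cn^2 + 2*b^3*n^5*cn - b^3*n^3*cn^3 + 4*b^3*n^3*cn + b^3*n*cn^3))*((a + b * cn) * s) + 2*((a^2 + 2*a*b*cn + b^2*n^2 + b^2*cn^2))*((-a^2*b*n^3*cn + a^2*b*n*cn - a*b^2*n^5 + 4*a*b^2*n^3*cn^2 - 2*a*b^2*n^3 +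 2*a*b^2*n*cn^2 + 2*b^3*n^5*cn - b^3*n^3*cn^3 + 4*b^3*n^3*cn + b^3*n*cn^3))*((-a^3*s - a^2*b*n^2*s*cn - a^2*b*n*c*sn - 3*a^2*b*s*cn - a*b^2*n^2*s*cn^2 - 2*a*b^2*n^2*s - 2*a*b^2*n*c*cn*sn - 3*a*b^2*s*cn^2 - b^3*n^4*s*cn - 2*b^3*n^3*c*sn - 2*b^3*n^2*s*cn - b^3*n*c*cn^2*sn - b^3*s*cn^3)) + (3*((a^4 + 2*a^3*b*n^2*cn + 4*a^3*b*cn + a^2*b^2*n^4 + 3*a^2*b^2*n^2*cn^2 + 4*a^2*b^2*n^2 + 6*a^2*b^2*cn^2 + 4*a*b^3*n^4*cn + 8*a*b^3*n^2*cn + 4*a*b^3*cn^3 + b^4*n^6 - b^4*n^4*cn^2 + 4*b^4*n^4 - b^4*n^2*cn^4 + 4*b^4*n^2*cn^2 + b^4*cn^4))*((-2*a*b*n*sn - 2*b^2*n*cn*sn)) - ((-2*a^3*b*n^3*sn - 4*a^3*b*n*sn - 6*a^2*b^2*n^3*cn*sn - 12*a^2*b^2*n*cn*sn - 4*a*b^3*n^5*sn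 - 8*a*b^3*n^3*sn - 12*a*b^3*n*cn^2*sn + 2*b^4*n^5*cn*sn + 4*b^4*n^3*cn^3*sn - 8*b^4*n^3*cn*sn - 4*b^4*n*cn^3*sn))*((a^2 + 2*a*b*cn + b^2*n^2 + b^2*cn^2)))*((-a*b*n^2*s*sn - a*b*n*c*cn - b^2*n^3*c + b^2*n^2*s*cn*sn - b^2*n*c*cn^2)) =
      -(b*n/2)*(((a^4 + 2*a^3*b*n^2*cn + 4*a^3*b*cn + a^2*b^2*n^4 + 3*a^2*b^2*n^2*cn^2 + 4*a^2*b^2*n^2 + 6*a^2*b^2*cn^2 + 4*a*b^3*n^4*cn + 8*a*b^3*n^2*cn + 4*a*b^3*cn^3 + b^4*n^6 - b^4*n^4*cn^2 + 4*b^4*n^4 - b^4*n^2*cn^4 + 4*b^4*n^2*cn^2 + b^4*cn^4))*(4 * a * b * n ^ 2 * (s * (a * (n ^ 2 - 1) - b * (2 * n ^ 2 + 1) * cn) - 3 * b * n * c * sn))) := by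
  linear_combination ((-2*a^6*b^2*n^5*s + 2*a^6*b^2*n^3*s + 4*a^5*b^3*n^5*s*cn + 8*a^5*b^3*n^3*s*cn + 14*a^4*b^4*n^5*s*cn^2 + 12*a^4*b^4*n^5*s + 10*a^4*b^4*n^3*s*cn^2 + 18*a^3*b^5*n^7*s*cn + 24*a^3*b^5*n^5*s*cn + 2*a^2*b^6*n^9*s + 16*a^2*b^6*n^7*s - 14*a^2*b^6*n^5*s*cn^4 - 10*a^2*b^6*n^3*s*cn^4 + 6*a*b^7*n^9*s*cn - 18*a*b^7*n^7*s*cn^3 - 4*a*b^7*n^5*s*cn^5 - 24*a*b^7*n^5*s*cn^3 - 8*a*b^7*n^3*s*cn^5 - 8*b^8*n^9*s*cn^2 - 16*b^8*n^7*s*cn^2 + 2*b^8*n^5*s*cn^6 - 12*b^8*n^5*s*cn^4 - 2*b^8*n^3*s*cn^6)) * hsn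

set_option maxRecDepth 100000 in
set_option maxHeartbeats 10000000 in
lemma aux_F2 (a b n c s cn sn : ℝ) (hs : s ^ 2 + c ^ 2 = 1)
    (hsn : sn ^ 2 + cn ^ 2 = 1) :
    2*((a^4 + 2*a^3*b*n^2*cn + 4*a^3*b*cn + a^2*b^2*n^4 + 3*a^2*b^2*n^2*cn^2 + 4*a^2*b^2*n^2 + 6*a^2*b^2*cn^2 + 4*a*b^3*n^4*cn + 8*a*b^3*n^2*cn + 4*a*b^3*cn^3 + b^4*n^6 - b^4*n^4*cn^2 + 4*b^4*n^4 - b^4*n^2*cn^4 + 4*b^4*n^2*cn^2 + b^4*cn^4))*((-a^2*b*n^3*cn + a^2*b*n*cn - a*b^2*n^5 + 4*a*b^2*n^3*cn^2 - 2*a*b^2*n^3 + 2*a*b^2*n*cn^2 + 2*b^3*n^5*cn - b^3*n^3*cn^3 + 4*b^3*n^3*cn + b^3*n*cn^3))*(b * sn) + 2*((a^2 + 2*a*b*cn + b^2*n^2 + b^2*cn^2))*((-a^2*b*n^3*cn + a^2*b*n*cn - a*b^2*n^5 + 4*a*b^2*n^3*cn^2 - 2*a*b^2*n^3 + 2*a*b^2*n*cn^2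 + 2*b^3*n^5*cn - b^3*n^3*cn^3 + 4*b^3*n^3*cn + b^3*n*cn^3))*((-a^2*b*n^2*sn - a*b^2*n^2*cn*sn - b^3*n^4*sn)) + (3*((a^4 + 2*a^3*b*n^2*cn + 4*a^3*b*cn + a^2*b^2*n^4 + 3*a^2*b^2*n^2*cn^2 + 4*a^2*b^2*n^2 + 6*a^2*b^2*cn^2 + 4*a*b^3*n^4*cn + 8*a*b^3*n^2*cn + 4*a*b^3*cn^3 + b^4*n^6 - b^4*n^4*cn^2 + 4*b^4*n^4 - b^4*n^2*cn^4 + 4*b^4*n^2*cn^2 + b^4*cn^4))*((-2*a*b*n*sn - 2*b^2*n*cn*sn)) - ((-2*a^3*b*n^3*sn - 4*a^3*b*n*sn - 6*a^2*b^2*n^3*cn*sn - 12*a^2*b^2*n*cn*sn - 4*a*b^3*n^5*sn - 8*a*b^3*n^3*sn - 12*a*b^3*n*cn^2*sn + 2*b^4*n^5*cn*sn + 4*b^4*n^3*cn^3*sn - 8*b^4*n^3*cn*sn - 4*b^4*n*cn^3*sn))*((a^2 + 2*a*b*cn + b^2*n^2 + b^2*cn^2)))*((a^2 + a*b*n^2*cn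 + 2*a*b*cn - b^2*n^2*cn^2 + 2*b^2*n^2 + b^2*cn^2)) =
      -(b*n/2)*(((a^4 + 2*a^3*b*n^2*cn + 4*a^3*b*cn + a^2*b^2*n^4 + 3*a^2*b^2*n^2*cn^2 + 4*a^2*b^2*n^2 + 6*a^2*b^2*cn^2 + 4*a*b^3*n^4*cn + 8*a*b^3*n^2*cn + 4*a*b^3*cn^3 + b^4*n^6 - b^4*n^4*cn^2 + 4*b^4*n^4 - b^4*n^2*cn^4 + 4*b^4*n^2*cn^2 + b^4*cn^4))*(2 * a * sn * (-(2 * a ^ 2 * (n ^ 2 - 1)) + 4 * a * b * (2 * n ^ 2 + 1) * cn - b ^ 2 * (n ^ 2 - 1) * (2 * cn ^ 2 - 1) + b ^ 2 * (11 * n ^ 2 + 1)))) := by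
  ring
set_option maxRecDepth 100000 in
set_option maxHeartbeats 10000000 in
open Real in
/-- The focal curve `C_γ = γ + c₁N + c₂B` of the toroidal helix
`γ(t) = ((a + b cos nt)cos t, (a + b cos nt)sin t, b sin nt)` is given, at every point where the
curvature and torsion of `γ` and the denominator `D` are nonzero, by the explicit coordinates
`(x_β(t), y_β(t), f̃(t))`. -/
theorem focal_curve_of_toroidal_helix
    (a b n : ℝ) (ha : a > 0) (hb : b > 0) (hn : n > 0)
    (γ : ℝ → E3)
    (hγ : ∀ t, γ t = mk3 ((a + b * cos (n * t)) * cos t)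
      ((a + b * cos (n * t)) * sin t) (b * sin (n * t)))
    (κ τ : ℝ → ℝ)
    (hκ : ∀ u, κ u = ‖cross3 (deriv γ u) (deriv (deriv γ) u)‖ / ‖deriv γ u‖ ^ 3)
    (hτ : ∀ u, τ u =
      ⟪cross3 (deriv γ u) (deriv (deriv γ) u), deriv (deriv (deriv γ)) u⟫ /
        ‖cross3 (deriv γ u) (deriv (deriv γ) u)‖ ^ 2)
    (t : ℝ) (hκ0 : κ t ≠ 0) (hτ0 : τ t ≠ 0)
    (D : ℝ)
    (hD : D = (4 * a ^ 2 * (n ^ 2 - 1) - b ^ 2 * (8 * n ^ 4 + 13 * n ^ 2 + 3)) * cos (n * t) +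
      b * (4 * a * (n ^ 4 - 1) - 4 * a * (2 * n ^ 2 + 1) * cos (2 * (n * t)) +
        b * (n ^ 2 - 1) * cos (3 * (n * t))))
    (hD0 : D ≠ 0)
    (T B N : E3) (c₁ c₂ : ℝ)
    (hT : T = ‖deriv γ t‖⁻¹ • deriv γ t)
    (hB : B = ‖cross3 (deriv γ t) (deriv (deriv γ) t)‖⁻¹ •
      cross3 (deriv γ t) (deriv (deriv γ) t))
    (hN : N = cross3 B T)
    (hc₁ : c₁ = (κ t)⁻¹)
    (hc₂ : c₂ = -deriv κ t / (‖deriv γ t‖ * κ t ^ 2 * τ t)) :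
    γ t + c₁ • N + c₂ • B =
      mk3
        (4 * a * b * n ^ 2 *
          (cos t * (a * (n ^ 2 - 1) - b * (2 * n ^ 2 + 1) * cos (n * t)) +
            3 * b * n * sin t * sin (n * t)) / D)
        (4 * a * b * n ^ 2 *
          (sin t * (a * (n ^ 2 - 1) - b * (2 * n ^ 2 + 1) * cos (n * t)) -
            3 * b * n * cos t * sin (n * t)) / D)
        (2 * a * sin (n * t) *
          (-(2 * a ^ 2 * (n ^ 2 - 1)) + 4 * a * b * (2 * n ^ 2 + 1) * cos (n * t) -
            b ^ 2 * (n ^ 2 - 1) * cos (2 * (n * t)) + b ^ 2 * (11 * n ^ 2 + 1)) / D) := by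
  have hd1 : ∀ u, HasDerivAt γ (mk3 ((-a*(Real.sin u) - b*n*(Real.cos u)*(Real.sin (n*u)) - b*(Real.sin u)*(Real.cos (n*u)))) ((a*(Real.cos u) - b*n*(Real.sin u)*(Real.sin (n*u)) + b*(Real.cos u)*(Real.cos (n*u)))) ((b*n*(Real.cos (n*u))))) u := by
    intro u
    have hγ' : γ = fun v => mk3 ((a + b * Real.cos (n * v)) * Real.cos v)
        ((a + b * Real.cos (n * v)) * Real.sin v) (b * Real.sin (n * v)) := funext hγ
    rw [hγ']
    refine hasDerivAt_mk3 ?_ ?_ ?_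
    · exact (((hasDerivAt_const u a).add ((hasDerivAt_cosmul n u).const_mul b)).mul (Real.hasDerivAt_cos u)).congr_d (by norm_num; try ring)
    · exact (((hasDerivAt_const u a).add ((hasDerivAt_cosmul n u).const_mul b)).mul (Real.hasDerivAt_sin u)).congr_d (by norm_num; try ring)
    · exact ((hasDerivAt_sinmul n u).const_mul b).congr_d (by norm_num; try ring)
  have hdf1 : deriv γ = fun u => mk3 ((-a*(Real.sin u) - b*n*(Real.cos u)*(Real.sin (n*u)) - b*(Real.sin u)*(Real.cos (n*u)))) ((a*(Real.cos u) - b*n*(Real.sin u)*(Real.sin (n*u)) + b*(Real.cos u)*(Real.cos (n*u)))) ((b*n*(Real.cos (n*u)))) := funext fun u => (hd1 u).deriv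
  have hd2 : ∀ u, HasDerivAt (deriv γ) (mk3 ((-a*(Real.cos u) - b*n^2*(Real.cos u)*(Real.cos (n*u)) + 2*b*n*(Real.sin u)*(Real.sin (n*u)) - b*(Real.cos u)*(Real.cos (n*u)))) ((-a*(Real.sin u) - b*n^2*(Real.sin u)*(Real.cos (n*u)) - 2*b*n*(Real.cos u)*(Real.sin (n*u)) - b*(Real.sin u)*(Real.cos (n*u)))) ((-b*n^2*(Real.sin (n*u))))) u := by
    intro u
    rw [hdf1]
    refine hasDerivAt_mk3 ?_ ?_ ?_
    · exact ((((((((Real.hasDerivAt_cos u).pow 0).mul ((Real.hasDerivAt_sin u).pow 1)).mul (((hasDerivAt_cosmul n u).pow 0).mul ((hasDerivAt_sinmul n u).pow 0))).const_mul (-1 * a ^ 1)).add (((((Real.hasDerivAt_cos u).pow 1).mul ((Real.hasDerivAt_sin u).pow 0)).mul (((hasDerivAt_cosmul n u).pow 0).mul ((hasDerivAt_sinmul n u).pow 1))).const_mul (-1 * b ^ 1 * n ^ 1))).add (((((Real.hasDerivAt_cos u).pow 0).mul ((Real.hasDerivAt_sin u).pow 1)).mul (((hasDerivAt_cosmul n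 u).pow 1).mul ((hasDerivAt_sinmul n u).pow 0))).const_mul (-1 * b ^ 1))).congr_d (by norm_num; try ring)).congr_fr (funext fun v => by simp only [Pi.add_apply, Pi.mul_apply, Pi.pow_apply, Pi.one_apply]; ring)
    · exact ((((((((Real.hasDerivAt_cos u).pow 1).mul ((Real.hasDerivAt_sin u).pow 0)).mul (((hasDerivAt_cosmul n u).pow 0).mul ((hasDerivAt_sinmul n u).pow 0))).const_mul (1 * a ^ 1)).add (((((Real.hasDerivAt_cos u).pow 0).mul ((Real.hasDerivAt_sin u).pow 1)).mul (((hasDerivAt_cosmul n u).pow 0).mul ((hasDerivAt_sinmul n u).pow 1))).const_mul (-1 * b ^ 1 * n ^ 1))).add (((((Real.hasDerivAt_cos u).pow 1).mul ((Real.hasDerivAt_sin u).pow 0)).mul (((hasDerivAt_cosmul n u).pow 1).mul ((hasDerivAt_sinmul n u).pow 0))).const_mul (1 * b ^ 1))).congr_d (by norm_num; try ring)).congr_fr (funext fun v => by simp only [Pi.add_apply, Pi.mul_apply, Pi.pow_apply, Pi.one_apply]; ring)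
    · exact ((((((Real.hasDerivAt_cos u).pow 0).mul ((Real.hasDerivAt_sin u).pow 0)).mul (((hasDerivAt_cosmul n u).pow 1).mul ((hasDerivAt_sinmul n u).pow 0))).const_mul (1 * b ^ 1 * n ^ 1)).congr_d (by norm_num; try ring)).congr_fr (funext fun v => by simp only [Pi.add_apply, Pi.mul_apply, Pi.pow_apply, Pi.one_apply]; ring)
  have hdf2 : deriv (deriv γ) = fun u => mk3 ((-a*(Real.cos u) - b*n^2*(Real.cos u)*(Real.cos (n*u)) + 2*b*n*(Real.sin u)*(Real.sin (n*u)) - b*(Real.cos u)*(Real.cos (n*u)))) ((-a*(Real.sin u) - b*n^2*(Real.sin u)*(Real.cos (n*u)) - 2*b*n*(Real.cos u)*(Real.sin (n*u)) - b*(Real.sin u)*(Real.cos (n*u)))) ((-b*n^2*(Real.sin (n*u)))) := funext fun u => (hd2 u).deriv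
  have hd3 : ∀ u, HasDerivAt (deriv (deriv γ)) (mk3 ((a*(Real.sin u) + b*n^3*(Real.cos u)*(Real.sin (n*u)) + 3*b*n^2*(Real.sin u)*(Real.cos (n*u)) + 3*b*n*(Real.cos u)*(Real.sin (n*u)) + b*(Real.sin u)*(Real.cos (n*u)))) ((-a*(Real.cos u) + b*n^3*(Real.sin u)*(Real.sin (n*u)) - 3*b*n^2*(Real.cos u)*(Real.cos (n*u)) + 3*b*n*(Real.sin u)*(Real.sin (n*u)) - b*(Real.cos u)*(Real.cos (n*u)))) ((-b*n^3*(Real.cos (n*u))))) u := by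
    intro u
    rw [hdf2]
    refine hasDerivAt_mk3 ?_ ?_ ?_
    · exact (((((((((Real.hasDerivAt_cos u).pow 1).mul ((Real.hasDerivAt_sin u).pow 0)).mul (((hasDerivAt_cosmul n u).pow 0).mul ((hasDerivAt_sinmul n u).pow 0))).const_mul (-1 * a ^ 1)).add (((((Real.hasDerivAt_cos u).pow 1).mul ((Real.hasDerivAt_sin u).pow 0)).mul (((hasDerivAt_cosmul n u).pow 1).mul ((hasDerivAt_sinmul n u).pow 0))).const_mul (-1 * b ^ 1 * n ^ 2))).add (((((Real.hasDerivAt_cos u).pow 0).mul ((Real.hasDerivAt_sin u).pow 1)).mul (((hasDerivAt_cosmul n u).pow 0).mul ((hasDerivAt_sinmul n u).pow 1))).const_mul (2 * b ^ 1 * n ^ 1))).add (((((Real.hasDerivAt_cos u).pow 1).mul ((Real.hasDerivAt_sin u).pow 0)).mul (((hasDerivAt_cosmul n u).pow 1).mul ((hasDerivAt_sinmul n u).pow 0))).const_mul (-1 * b ^ 1))).congr_d (by norm_num; try ring)).congr_fr (funext fun v => by simp only [Pi.add_apply, Pi.mul_apply, Pi.pow_apply, Pi.one_apply]; ring)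
    · exact (((((((((Real.hasDerivAt_cos u).pow 0).mul ((Real.hasDerivAt_sin u).pow 1)).mul (((hasDerivAt_cosmul n u).pow 0).mul ((hasDerivAt_sinmul n u).pow 0))).const_mul (-1 * a ^ 1)).add (((((Real.hasDerivAt_cos u).pow 0).mul ((Real.hasDerivAt_sin u).pow 1)).mul (((hasDerivAt_cosmul n u).pow 1).mul ((hasDerivAt_sinmul n u).pow 0))).const_mul (-1 * b ^ 1 * n ^ 2))).add (((((Real.hasDerivAt_cos u).pow 1).mul ((Real.hasDerivAt_sin u).pow 0)).mul (((hasDerivAt_cosmul n u).pow 0).mul ((hasDerivAt_sinmul n u).pow 1))).const_mul (-2 * b ^ 1 * n ^ 1))).add (((((Real.hasDerivAt_cos u).pow 0).mul ((Real.hasDerivAt_sin u).pow 1)).mul (((hasDerivAt_cosmul n u).pow 1).mul ((hasDerivAt_sinmul n u).pow 0))).const_mul (-1 * b ^ 1))).congr_d (by norm_num; try ring)).congr_fr (funext fun v => by simp only [Pi.add_apply, Pi.mul_apply, Pi.pow_apply, Pi.one_apply]; ring)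
    · exact ((((((Real.hasDerivAt_cos u).pow 0).mul ((Real.hasDerivAt_sin u).pow 0)).mul (((hasDerivAt_cosmul n u).pow 0).mul ((hasDerivAt_sinmul n u).pow 1))).const_mul (-1 * b ^ 1 * n ^ 2)).congr_d (by norm_num; try ring)).congr_fr (funext fun v => by simp only [Pi.add_apply, Pi.mul_apply, Pi.pow_apply, Pi.one_apply]; ring)
  have hwv : ∀ u, cross3 (mk3 ((-a*(Real.sin u) - b*n*(Real.cos u)*(Real.sin (n*u)) - b*(Real.sin u)*(Real.cos (n*u)))) ((a*(Real.cos u) - b*n*(Real.sin u)*(Real.sin (n*u)) + b*(Real.cos u)*(Real.cos (n*u)))) ((b*n*(Real.cos (n*u))))) (mk3 ((-a*(Real.cos u) - b*n^2*(Real.cos u)*(Real.cos (n*u)) + 2*b*n*(Real.sin u)*(Real.sin (n*u)) - b*(Real.cos u)*(Real.cos (n*u)))) ((-a*(Real.sin u) - b*n^2*(Real.sin u)*(Real.cos (n*u)) - 2*b*n*(Real.cos u)*(Real.sin (n*u)) - b*(Real.sin u)*(Real.cos (n*u)))) ((-b*n^2*(Real.sin (n*u))))) = mk3 ((-a*b*n^2*(Real.cos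 u)*(Real.sin (n*u)) + a*b*n*(Real.sin u)*(Real.cos (n*u)) + b^2*n^3*(Real.sin u) + b^2*n^2*(Real.cos u)*(Real.cos (n*u))*(Real.sin (n*u)) + b^2*n*(Real.sin u)*(Real.cos (n*u))^2)) ((-a*b*n^2*(Real.sin u)*(Real.sin (n*u)) - a*b*n*(Real.cos u)*(Real.cos (n*u)) - b^2*n^3*(Real.cos u) + b^2*n^2*(Real.sin u)*(Real.cos (n*u))*(Real.sin (n*u)) - b^2*n*(Real.cos u)*(Real.cos (n*u))^2)) ((a^2 + a*b*n^2*(Real.cos (n*u)) + 2*a*b*(Real.cos (n*u)) - b^2*n^2*(Real.cos (n*u))^2 + 2*b^2*n^2 + b^2*(Real.cos (n*u))^2)) := by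
    intro u
    have hs := Real.sin_sq_add_cos_sq u
    have hsn := Real.sin_sq_add_cos_sq (n*u)
    unfold cross3
    refine mk3_ext ?_ ?_ ?_ <;> simp only [mk3_c0, mk3_c1, mk3_c2]
    · linear_combination ((b^2*n^3*(Real.sin u))) * hsn
    · linear_combination ((-b^2*n^3*(Real.cos u))) * hsn
    · linear_combination ((a^2 + a*b*n^2*(Real.cos (n*u)) + 2*a*b*(Real.cos (n*u)) + b^2*n^2*(Real.cos (n*u))^2 + 2*b^2*n^2*(Real.sin (n*u))^2 + b^2*(Real.cos (n*u))^2)) * hs + ((2*b^2*n^2)) * hsn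
  have hng : ∀ u, ‖mk3 ((-a*(Real.sin u) - b*n*(Real.cos u)*(Real.sin (n*u)) - b*(Real.sin u)*(Real.cos (n*u)))) ((a*(Real.cos u) - b*n*(Real.sin u)*(Real.sin (n*u)) + b*(Real.cos u)*(Real.cos (n*u)))) ((b*n*(Real.cos (n*u))))‖ = Real.sqrt ((a^2 + 2*a*b*(Real.cos (n*u)) + b^2*n^2 + b^2*(Real.cos (n*u))^2)) := by
    intro u
    have hs := Real.sin_sq_add_cos_sq u
    have hsn := Real.sin_sq_add_cos_sq (n*u)
    rw [norm_mk3_s13]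
    congr 1
    linear_combination ((a^2 + 2*a*b*(Real.cos (n*u)) + b^2*n^2*(Real.sin (n*u))^2 + b^2*(Real.cos (n*u))^2)) * hs + ((b^2*n^2)) * hsn
  have hnw : ∀ u, ‖mk3 ((-a*b*n^2*(Real.cos u)*(Real.sin (n*u)) + a*b*n*(Real.sin u)*(Real.cos (n*u)) + b^2*n^3*(Real.sin u) + b^2*n^2*(Real.cos u)*(Real.cos (n*u))*(Real.sin (n*u)) + b^2*n*(Real.sin u)*(Real.cos (n*u))^2)) ((-a*b*n^2*(Real.sin u)*(Real.sin (n*u)) - a*b*n*(Real.cos u)*(Real.cos (n*u)) - b^2*n^3*(Real.cos u) + b^2*n^2*(Real.sin u)*(Real.cos (n*u))*(Real.sin (n*u)) - b^2*n*(Real.cos u)*(Real.cos (n*u))^2)) ((a^2 + a*b*n^2*(Real.cos (n*u)) + 2*a*b*(Real.cos (n*u)) - b^2*n^2*(Real.cos (n*u))^2 + 2*b^2*n^2 + b^2*(Real.cos (n*u))^2))‖ = Real.sqrt ((a^4 + 2*a^3*b*n^2*(Real.cos (n*u)) + 4*a^3*b*(Real.cos (n*u)) + a^2*b^2*n^4 +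 3*a^2*b^2*n^2*(Real.cos (n*u))^2 + 4*a^2*b^2*n^2 + 6*a^2*b^2*(Real.cos (n*u))^2 + 4*a*b^3*n^4*(Real.cos (n*u)) + 8*a*b^3*n^2*(Real.cos (n*u)) + 4*a*b^3*(Real.cos (n*u))^3 + b^4*n^6 - b^4*n^4*(Real.cos (n*u))^2 + 4*b^4*n^4 - b^4*n^2*(Real.cos (n*u))^4 + 4*b^4*n^2*(Real.cos (n*u))^2 + b^4*(Real.cos (n*u))^4)) := by
    intro u
    have hs := Real.sin_sq_add_cos_sq u
    have hsn := Real.sin_sq_add_cos_sq (n*u)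
    rw [norm_mk3_s13]
    congr 1
    linear_combination ((a^2*b^2*n^4*(Real.sin (n*u))^2 + a^2*b^2*n^2*(Real.cos (n*u))^2 - 2*a*b^3*n^4*(Real.cos (n*u))*(Real.sin (n*u))^2 + 2*a*b^3*n^4*(Real.cos (n*u)) + 2*a*b^3*n^2*(Real.cos (n*u))^3 + b^4*n^6 + b^4*n^4*(Real.cos (n*u))^2*(Real.sin (n*u))^2 + 2*b^4*n^4*(Real.cos (n*u))^2 + b^4*n^2*(Real.cos (n*u))^4)) * hs + ((a^2*b^2*n^4 - 2*a*b^3*n^4*(Real.cos (n*u)) + b^4*n^4*(Real.cos (n*u))^2)) * hsn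
  have hκf : κ = fun u => Real.sqrt ((a^4 + 2*a^3*b*n^2*(Real.cos (n*u)) + 4*a^3*b*(Real.cos (n*u)) + a^2*b^2*n^4 + 3*a^2*b^2*n^2*(Real.cos (n*u))^2 + 4*a^2*b^2*n^2 + 6*a^2*b^2*(Real.cos (n*u))^2 + 4*a*b^3*n^4*(Real.cos (n*u)) + 8*a*b^3*n^2*(Real.cos (n*u)) + 4*a*b^3*(Real.cos (n*u))^3 + b^4*n^6 - b^4*n^4*(Real.cos (n*u))^2 + 4*b^4*n^4 - b^4*n^2*(Real.cos (n*u))^4 + 4*b^4*n^2*(Real.cos (n*u))^2 + b^4*(Real.cos (n*u))^4)) / Real.sqrt ((a^2 + 2*a*b*(Real.cos (n*u)) + b^2*n^2 + b^2*(Real.cos (n*u))^2)) ^ 3 := by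
    funext u
    rw [hκ u, (hd1 u).deriv, (hd2 u).deriv, hwv u, hng u, hnw u]
  have hQpos : (0:ℝ) < (a^2 + 2*a*b*(Real.cos (n*t)) + b^2*n^2 + b^2*(Real.cos (n*t))^2) := by
    nlinarith [sq_nonneg (a + b * Real.cos (n*t)), mul_pos (mul_pos hb hb) (mul_pos hn hn), Real.sin_sq_add_cos_sq (n*t)]
  have hWsqt : ((a^4 + 2*a^3*b*n^2*(Real.cos (n*t)) + 4*a^3*b*(Real.cos (n*t)) + a^2*b^2*n^4 + 3*a^2*b^2*n^2*(Real.cos (n*t))^2 + 4*a^2*b^2*n^2 + 6*a^2*b^2*(Real.cos (n*t))^2 + 4*a*b^3*n^4*(Real.cos (n*t)) + 8*a*b^3*n^2*(Real.cos (n*t)) + 4*a*b^3*(Real.cos (n*t))^3 + b^4*n^6 - b^4*n^4*(Real.cos (n*t))^2 + 4*b^4*n^4 - b^4*n^2*(Real.cos (n*t))^4 + 4*b^4*n^2*(Real.cos (n*t))^2 + b^4*(Real.cos (n*t))^4)) = ((-a*b*n^2*(Real.cos t)*(Real.sin (n*t)) + a*b*n*(Real.sin t)*(Real.cos (n*t))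 + b^2*n^3*(Real.sin t) + b^2*n^2*(Real.cos t)*(Real.cos (n*t))*(Real.sin (n*t)) + b^2*n*(Real.sin t)*(Real.cos (n*t))^2))^2 + ((-a*b*n^2*(Real.sin t)*(Real.sin (n*t)) - a*b*n*(Real.cos t)*(Real.cos (n*t)) - b^2*n^3*(Real.cos t) + b^2*n^2*(Real.sin t)*(Real.cos (n*t))*(Real.sin (n*t)) - b^2*n*(Real.cos t)*(Real.cos (n*t))^2))^2 + ((a^2 + a*b*n^2*(Real.cos (n*t)) + 2*a*b*(Real.cos (n*t)) - b^2*n^2*(Real.cos (n*t))^2 + 2*b^2*n^2 + b^2*(Real.cos (n*t))^2))^2 := by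
    have hs := Real.sin_sq_add_cos_sq t
    have hsn := Real.sin_sq_add_cos_sq (n*t)
    linear_combination ((-a^2*b^2*n^4*(Real.sin (n*t))^2 - a^2*b^2*n^2*(Real.cos (n*t))^2 + 2*a*b^3*n^4*(Real.cos (n*t))*(Real.sin (n*t))^2 - 2*a*b^3*n^4*(Real.cos (n*t)) - 2*a*b^3*n^2*(Real.cos (n*t))^3 - b^4*n^6 - b^4*n^4*(Real.cos (n*t))^2*(Real.sin (n*t))^2 - 2*b^4*n^4*(Real.cos (n*t))^2 - b^4*n^2*(Real.cos (n*t))^4)) * hs + ((-a^2*b^2*n^4 + 2*a*b^3*n^4*(Real.cos (n*t)) - b^4*n^4*(Real.cos (n*t))^2)) * hsn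
  have hWnn : (0:ℝ) ≤ (a^4 + 2*a^3*b*n^2*(Real.cos (n*t)) + 4*a^3*b*(Real.cos (n*t)) + a^2*b^2*n^4 + 3*a^2*b^2*n^2*(Real.cos (n*t))^2 + 4*a^2*b^2*n^2 + 6*a^2*b^2*(Real.cos (n*t))^2 + 4*a*b^3*n^4*(Real.cos (n*t)) + 8*a*b^3*n^2*(Real.cos (n*t)) + 4*a*b^3*(Real.cos (n*t))^3 + b^4*n^6 - b^4*n^4*(Real.cos (n*t))^2 + 4*b^4*n^4 - b^4*n^2*(Real.cos (n*t))^4 + 4*b^4*n^2*(Real.cos (n*t))^2 + b^4*(Real.cos (n*t))^4) := by rw [hWsqt]; positivity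
  have hκt : κ t = Real.sqrt ((a^4 + 2*a^3*b*n^2*(Real.cos (n*t)) + 4*a^3*b*(Real.cos (n*t)) + a^2*b^2*n^4 + 3*a^2*b^2*n^2*(Real.cos (n*t))^2 + 4*a^2*b^2*n^2 + 6*a^2*b^2*(Real.cos (n*t))^2 + 4*a*b^3*n^4*(Real.cos (n*t)) + 8*a*b^3*n^2*(Real.cos (n*t)) + 4*a*b^3*(Real.cos (n*t))^3 + b^4*n^6 - b^4*n^4*(Real.cos (n*t))^2 + 4*b^4*n^4 - b^4*n^2*(Real.cos (n*t))^4 + 4*b^4*n^2*(Real.cos (n*t))^2 + b^4*(Real.cos (n*t))^4)) / Real.sqrt ((a^2 + 2*a*b*(Real.cos (n*t)) + b^2*n^2 + b^2*(Real.cos (n*t))^2)) ^ 3 := by rw [hκf]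
  have hW0 : ((a^4 + 2*a^3*b*n^2*(Real.cos (n*t)) + 4*a^3*b*(Real.cos (n*t)) + a^2*b^2*n^4 + 3*a^2*b^2*n^2*(Real.cos (n*t))^2 + 4*a^2*b^2*n^2 + 6*a^2*b^2*(Real.cos (n*t))^2 + 4*a*b^3*n^4*(Real.cos (n*t)) + 8*a*b^3*n^2*(Real.cos (n*t)) + 4*a*b^3*(Real.cos (n*t))^3 + b^4*n^6 - b^4*n^4*(Real.cos (n*t))^2 + 4*b^4*n^4 - b^4*n^2*(Real.cos (n*t))^4 + 4*b^4*n^2*(Real.cos (n*t))^2 + b^4*(Real.cos (n*t))^4)) ≠ 0 := by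
    intro h
    exact hκ0 (by rw [hκt, h, Real.sqrt_zero, zero_div])
  have hWpos : (0:ℝ) < (a^4 + 2*a^3*b*n^2*(Real.cos (n*t)) + 4*a^3*b*(Real.cos (n*t)) + a^2*b^2*n^4 + 3*a^2*b^2*n^2*(Real.cos (n*t))^2 + 4*a^2*b^2*n^2 + 6*a^2*b^2*(Real.cos (n*t))^2 + 4*a*b^3*n^4*(Real.cos (n*t)) + 8*a*b^3*n^2*(Real.cos (n*t)) + 4*a*b^3*(Real.cos (n*t))^3 + b^4*n^6 - b^4*n^4*(Real.cos (n*t))^2 + 4*b^4*n^4 - b^4*n^2*(Real.cos (n*t))^4 + 4*b^4*n^2*(Real.cos (n*t))^2 + b^4*(Real.cos (n*t))^4) := lt_of_le_of_ne hWnn (Ne.symm hW0)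
  have hQ0 : ((a^2 + 2*a*b*(Real.cos (n*t)) + b^2*n^2 + b^2*(Real.cos (n*t))^2)) ≠ 0 := ne_of_gt hQpos
  have hsq0 : (0:ℝ) < Real.sqrt ((a^2 + 2*a*b*(Real.cos (n*t)) + b^2*n^2 + b^2*(Real.cos (n*t))^2)) := Real.sqrt_pos.2 hQpos
  have hsw0 : (0:ℝ) < Real.sqrt ((a^4 + 2*a^3*b*n^2*(Real.cos (n*t)) + 4*a^3*b*(Real.cos (n*t)) + a^2*b^2*n^4 + 3*a^2*b^2*n^2*(Real.cos (n*t))^2 + 4*a^2*b^2*n^2 + 6*a^2*b^2*(Real.cos (n*t))^2 + 4*a*b^3*n^4*(Real.cos (n*t)) + 8*a*b^3*n^2*(Real.cos (n*t)) + 4*a*b^3*(Real.cos (n*t))^3 + b^4*n^6 - b^4*n^4*(Real.cos (n*t))^2 + 4*b^4*n^4 - b^4*n^2*(Real.cos (n*t))^4 + 4*b^4*n^2*(Real.cos (n*t))^2 + b^4*(Real.cos (n*t))^4)) := Real.sqrt_pos.2 hWpos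
  have hsq2 : Real.sqrt ((a^2 + 2*a*b*(Real.cos (n*t)) + b^2*n^2 + b^2*(Real.cos (n*t))^2)) ^ 2 = (a^2 + 2*a*b*(Real.cos (n*t)) + b^2*n^2 + b^2*(Real.cos (n*t))^2) := Real.sq_sqrt hQpos.le
  have hsw2 : Real.sqrt ((a^4 + 2*a^3*b*n^2*(Real.cos (n*t)) + 4*a^3*b*(Real.cos (n*t)) + a^2*b^2*n^4 + 3*a^2*b^2*n^2*(Real.cos (n*t))^2 + 4*a^2*b^2*n^2 + 6*a^2*b^2*(Real.cos (n*t))^2 + 4*a*b^3*n^4*(Real.cos (n*t)) + 8*a*b^3*n^2*(Real.cos (n*t)) + 4*a*b^3*(Real.cos (n*t))^3 + b^4*n^6 - b^4*n^4*(Real.cos (n*t))^2 + 4*b^4*n^4 - b^4*n^2*(Real.cos (n*t))^4 + 4*b^4*n^2*(Real.cos (n*t))^2 + b^4*(Real.cos (n*t))^4)) ^ 2 = (a^4 + 2*a^3*b*n^2*(Real.cos (n*t)) + 4*a^3*b*(Real.cos (n*t)) + a^2*b^2*n^4 + 3*a^2*b^2*n^2*(Real.cos (n*t))^2 + 4*a^2*b^2*n^2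 + 6*a^2*b^2*(Real.cos (n*t))^2 + 4*a*b^3*n^4*(Real.cos (n*t)) + 8*a*b^3*n^2*(Real.cos (n*t)) + 4*a*b^3*(Real.cos (n*t))^3 + b^4*n^6 - b^4*n^4*(Real.cos (n*t))^2 + 4*b^4*n^4 - b^4*n^2*(Real.cos (n*t))^4 + 4*b^4*n^2*(Real.cos (n*t))^2 + b^4*(Real.cos (n*t))^4) := Real.sq_sqrt hWnn
  have hτt : τ t = ((-a^2*b*n^3*(Real.cos (n*t)) + a^2*b*n*(Real.cos (n*t)) - a*b^2*n^5 + 4*a*b^2*n^3*(Real.cos (n*t))^2 - 2*a*b^2*n^3 + 2*a*b^2*n*(Real.cos (n*t))^2 + 2*b^3*n^5*(Real.cos (n*t)) - b^3*n^3*(Real.cos (n*t))^3 + 4*b^3*n^3*(Real.cos (n*t)) + b^3*n*(Real.cos (n*t))^3)) / ((a^4 + 2*a^3*b*n^2*(Real.cos (n*t)) + 4*a^3*b*(Real.cos (n*t)) + a^2*b^2*n^4 + 3*a^2*b^2*n^2*(Real.cos (n*t))^2 + 4*a^2*b^2*n^2 + 6*a^2*b^2*(Real.cos (n*t))^2 +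 4*a*b^3*n^4*(Real.cos (n*t)) + 8*a*b^3*n^2*(Real.cos (n*t)) + 4*a*b^3*(Real.cos (n*t))^3 + b^4*n^6 - b^4*n^4*(Real.cos (n*t))^2 + 4*b^4*n^4 - b^4*n^2*(Real.cos (n*t))^4 + 4*b^4*n^2*(Real.cos (n*t))^2 + b^4*(Real.cos (n*t))^4)) := by
    have hs := Real.sin_sq_add_cos_sq t
    have hsn := Real.sin_sq_add_cos_sq (n*t)
    rw [hτ t, (hd1 t).deriv, (hd2 t).deriv, (hd3 t).deriv, hwv t, hnw t, inner_mk3, Real.sq_sqrt hWnn]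
    congr 1
    linear_combination ((a^2*b*n*(Real.cos (n*t)) - a*b^2*n^5*(Real.sin (n*t))^2 + 3*a*b^2*n^3*(Real.cos (n*t))^2 - 3*a*b^2*n^3*(Real.sin (n*t))^2 + a*b^2*n^3 + 2*a*b^2*n*(Real.cos (n*t))^2 + b^3*n^5*(Real.cos (n*t))*(Real.sin (n*t))^2 + 3*b^3*n^5*(Real.cos (n*t)) + 3*b^3*n^3*(Real.cos (n*t))^3 + 3*b^3*n^3*(Real.cos (n*t))*(Real.sin (n*t))^2 + b^3*n^3*(Real.cos (n*t)) + b^3*n*(Real.cos (n*t))^3)) * hs + ((-a*b^2*n^5 - 3*a*b^2*n^3 + b^3*n^5*(Real.cos (n*t)) + 3*b^3*n^3*(Real.cos (n*t)))) * hsn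
  have hdet0 : ((-a^2*b*n^3*(Real.cos (n*t)) + a^2*b*n*(Real.cos (n*t)) - a*b^2*n^5 + 4*a*b^2*n^3*(Real.cos (n*t))^2 - 2*a*b^2*n^3 + 2*a*b^2*n*(Real.cos (n*t))^2 + 2*b^3*n^5*(Real.cos (n*t)) - b^3*n^3*(Real.cos (n*t))^3 + 4*b^3*n^3*(Real.cos (n*t)) + b^3*n*(Real.cos (n*t))^3)) ≠ 0 := by
    intro h
    exact hτ0 (by rw [hτt, h, zero_div])
  have hQd : HasDerivAt (fun u => (a^2 + 2*a*b*(Real.cos (n*u)) + b^2*n^2 + b^2*(Real.cos (n*u))^2)) ((-2*a*b*n*(Real.sin (n*t)) - 2*b^2*n*(Real.cos (n*t))*(Real.sin (n*t)))) t := (((((((((Real.hasDerivAt_cos t).pow 0).mul ((Real.hasDerivAt_sin t).pow 0)).mul (((hasDerivAt_cosmul n t).pow 0).mul ((hasDerivAt_sinmul n t).pow 0))).const_mul (1 * a ^ 2)).add (((((Real.hasDerivAt_cos t).pow 0).mul ((Real.hasDerivAt_sin t).pow 0)).mul (((hasDerivAt_cosmul n t).pow 1).mul ((hasDerivAt_sinmul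 n t).pow 0))).const_mul (2 * a ^ 1 * b ^ 1))).add (((((Real.hasDerivAt_cos t).pow 0).mul ((Real.hasDerivAt_sin t).pow 0)).mul (((hasDerivAt_cosmul n t).pow 0).mul ((hasDerivAt_sinmul n t).pow 0))).const_mul (1 * b ^ 2 * n ^ 2))).add (((((Real.hasDerivAt_cos t).pow 0).mul ((Real.hasDerivAt_sin t).pow 0)).mul (((hasDerivAt_cosmul n t).pow 2).mul ((hasDerivAt_sinmul n t).pow 0))).const_mul (1 * b ^ 2))).congr_d (by norm_num; try ring)).congr_fr (funext fun v => by simp only [Pi.add_apply, Pi.mul_apply, Pi.pow_apply, Pi.one_apply]; ring)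
  have hWd : HasDerivAt (fun u => (a^4 + 2*a^3*b*n^2*(Real.cos (n*u)) + 4*a^3*b*(Real.cos (n*u)) + a^2*b^2*n^4 + 3*a^2*b^2*n^2*(Real.cos (n*u))^2 + 4*a^2*b^2*n^2 + 6*a^2*b^2*(Real.cos (n*u))^2 + 4*a*b^3*n^4*(Real.cos (n*u)) + 8*a*b^3*n^2*(Real.cos (n*u)) + 4*a*b^3*(Real.cos (n*u))^3 + b^4*n^6 - b^4*n^4*(Real.cos (n*u))^2 + 4*b^4*n^4 - b^4*n^2*(Real.cos (n*u))^4 + 4*b^4*n^2*(Real.cos (n*u))^2 + b^4*(Real.cos (n*u))^4)) ((-2*a^3*b*n^3*(Real.sin (n*t)) - 4*a^3*b*n*(Real.sin (n*t)) - 6*a^2*b^2*n^3*(Real.cos (n*t))*(Real.sin (n*t)) - 12*a^2*b^2*n*(Real.cos (n*t))*(Real.sin (n*t)) - 4*a*b^3*n^5*(Real.sin (n*t)) - 8*a*b^3*n^3*(Real.sin (n*t)) - 12*a*b^3*n*(Real.cos (n*t))^2*(Real.sin (n*t)) + 2*b^4*n^5*(Real.cos (n*t))*(Real.sin (n*t))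 + 4*b^4*n^3*(Real.cos (n*t))^3*(Real.sin (n*t)) - 8*b^4*n^3*(Real.cos (n*t))*(Real.sin (n*t)) - 4*b^4*n*(Real.cos (n*t))^3*(Real.sin (n*t)))) t := (((((((((((((((((((((Real.hasDerivAt_cos t).pow 0).mul ((Real.hasDerivAt_sin t).pow 0)).mul (((hasDerivAt_cosmul n t).pow 0).mul ((hasDerivAt_sinmul n t).pow 0))).const_mul (1 * a ^ 4)).add (((((Real.hasDerivAt_cos t).pow 0).mul ((Real.hasDerivAt_sin t).pow 0)).mul (((hasDerivAt_cosmul n t).pow 1).mul ((hasDerivAt_sinmul n t).pow 0))).const_mul (2 * a ^ 3 * b ^ 1 * n ^ 2))).add (((((Real.hasDerivAt_cos t).pow 0).mul ((Real.hasDerivAt_sin t).pow 0)).mul (((hasDerivAt_cosmul n t).pow 1).mul ((hasDerivAt_sinmul n t).pow 0))).const_mul (4 * a ^ 3 * b ^ 1))).add (((((Real.hasDerivAt_cos t).pow 0).mul ((Real.hasDerivAt_sin t).pow 0)).mul (((hasDerivAt_cosmul n t).pow 0).mul ((hasDerivAt_sinmul n t).pow 0))).const_mul (1 * a ^ 2 *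 b ^ 2 * n ^ 4))).add (((((Real.hasDerivAt_cos t).pow 0).mul ((Real.hasDerivAt_sin t).pow 0)).mul (((hasDerivAt_cosmul n t).pow 2).mul ((hasDerivAt_sinmul n t).pow 0))).const_mul (3 * a ^ 2 * b ^ 2 * n ^ 2))).add (((((Real.hasDerivAt_cos t).pow 0).mul ((Real.hasDerivAt_sin t).pow 0)).mul (((hasDerivAt_cosmul n t).pow 0).mul ((hasDerivAt_sinmul n t).pow 0))).const_mul (4 * a ^ 2 * b ^ 2 * n ^ 2))).add (((((Real.hasDerivAt_cos t).pow 0).mul ((Real.hasDerivAt_sin t).pow 0)).mul (((hasDerivAt_cosmul n t).pow 2).mul ((hasDerivAt_sinmul n t).pow 0))).const_mul (6 * a ^ 2 * b ^ 2))).add (((((Real.hasDerivAt_cos t).pow 0).mul ((Real.hasDerivAt_sin t).pow 0)).mul (((hasDerivAt_cosmul n t).pow 1).mul ((hasDerivAt_sinmul n t).pow 0))).const_mul (4 * a ^ 1 * b ^ 3 * n ^ 4))).add (((((Real.hasDerivAt_cos t).pow 0).mul ((Real.hasDerivAt_sin t).pow 0)).mul (((hasDerivAt_cosmul n t).pow 1).mul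 ((hasDerivAt_sinmul n t).pow 0))).const_mul (8 * a ^ 1 * b ^ 3 * n ^ 2))).add (((((Real.hasDerivAt_cos t).pow 0).mul ((Real.hasDerivAt_sin t).pow 0)).mul (((hasDerivAt_cosmul n t).pow 3).mul ((hasDerivAt_sinmul n t).pow 0))).const_mul (4 * a ^ 1 * b ^ 3))).add (((((Real.hasDerivAt_cos t).pow 0).mul ((Real.hasDerivAt_sin t).pow 0)).mul (((hasDerivAt_cosmul n t).pow 0).mul ((hasDerivAt_sinmul n t).pow 0))).const_mul (1 * b ^ 4 * n ^ 6))).add (((((Real.hasDerivAt_cos t).pow 0).mul ((Real.hasDerivAt_sin t).pow 0)).mul (((hasDerivAt_cosmul n t).pow 2).mul ((hasDerivAt_sinmul n t).pow 0))).const_mul (-1 * b ^ 4 * n ^ 4))).add (((((Real.hasDerivAt_cos t).pow 0).mul ((Real.hasDerivAt_sin t).pow 0)).mul (((hasDerivAt_cosmul n t).pow 0).mul ((hasDerivAt_sinmul n t).pow 0))).const_mul (4 * b ^ 4 * n ^ 4))).add (((((Real.hasDerivAt_cos t).pow 0).mul ((Real.hasDerivAt_sin t).pow 0)).mul (((hasDerivAt_cosmul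 n t).pow 4).mul ((hasDerivAt_sinmul n t).pow 0))).const_mul (-1 * b ^ 4 * n ^ 2))).add (((((Real.hasDerivAt_cos t).pow 0).mul ((Real.hasDerivAt_sin t).pow 0)).mul (((hasDerivAt_cosmul n t).pow 2).mul ((hasDerivAt_sinmul n t).pow 0))).const_mul (4 * b ^ 4 * n ^ 2))).add (((((Real.hasDerivAt_cos t).pow 0).mul ((Real.hasDerivAt_sin t).pow 0)).mul (((hasDerivAt_cosmul n t).pow 4).mul ((hasDerivAt_sinmul n t).pow 0))).const_mul (1 * b ^ 4))).congr_d (by norm_num; try ring)).congr_fr (funext fun v => by simp only [Pi.add_apply, Pi.mul_apply, Pi.pow_apply, Pi.one_apply]; ring)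
  have hKd := (hWd.sqrt hW0).div ((hQd.sqrt hQ0).pow 3) (by simp only [Pi.pow_apply]; exact pow_ne_zero 3 hsq0.ne')
  have hκderiv : deriv κ t = (((-2*a^3*b*n^3*(Real.sin (n*t)) - 4*a^3*b*n*(Real.sin (n*t)) - 6*a^2*b^2*n^3*(Real.cos (n*t))*(Real.sin (n*t)) - 12*a^2*b^2*n*(Real.cos (n*t))*(Real.sin (n*t)) - 4*a*b^3*n^5*(Real.sin (n*t)) - 8*a*b^3*n^3*(Real.sin (n*t)) - 12*a*b^3*n*(Real.cos (n*t))^2*(Real.sin (n*t)) + 2*b^4*n^5*(Real.cos (n*t))*(Real.sin (n*t)) + 4*b^4*n^3*(Real.cos (n*t))^3*(Real.sin (n*t)) - 8*b^4*n^3*(Real.cos (n*t))*(Real.sin (n*t)) - 4*b^4*n*(Real.cos (n*t))^3*(Real.sin (n*t))))/(2*Real.sqrt ((a^4 + 2*a^3*b*n^2*(Real.cos (n*t)) + 4*a^3*b*(Real.cos (n*t)) + a^2*b^2*n^4 + 3*a^2*b^2*n^2*(Real.cos (n*t))^2 + 4*a^2*b^2*n^2 + 6*a^2*b^2*(Real.cos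 (n*t))^2 + 4*a*b^3*n^4*(Real.cos (n*t)) + 8*a*b^3*n^2*(Real.cos (n*t)) + 4*a*b^3*(Real.cos (n*t))^3 + b^4*n^6 - b^4*n^4*(Real.cos (n*t))^2 + 4*b^4*n^4 - b^4*n^2*(Real.cos (n*t))^4 + 4*b^4*n^2*(Real.cos (n*t))^2 + b^4*(Real.cos (n*t))^4)))*Real.sqrt ((a^2 + 2*a*b*(Real.cos (n*t)) + b^2*n^2 + b^2*(Real.cos (n*t))^2))^3 - Real.sqrt ((a^4 + 2*a^3*b*n^2*(Real.cos (n*t)) + 4*a^3*b*(Real.cos (n*t)) + a^2*b^2*n^4 + 3*a^2*b^2*n^2*(Real.cos (n*t))^2 + 4*a^2*b^2*n^2 + 6*a^2*b^2*(Real.cos (n*t))^2 + 4*a*b^3*n^4*(Real.cos (n*t)) + 8*a*b^3*n^2*(Real.cos (n*t)) + 4*a*b^3*(Real.cos (n*t))^3 + b^4*n^6 - b^4*n^4*(Real.cos (n*t))^2 + 4*b^4*n^4 - b^4*n^2*(Real.cos (n*t))^4 + 4*b^4*n^2*(Real.cos (n*t))^2 + b^4*(Real.cos (n*t))^4))*(3*Real.sqrt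 ((a^2 + 2*a*b*(Real.cos (n*t)) + b^2*n^2 + b^2*(Real.cos (n*t))^2))^2*(((-2*a*b*n*(Real.sin (n*t)) - 2*b^2*n*(Real.cos (n*t))*(Real.sin (n*t))))/(2*Real.sqrt ((a^2 + 2*a*b*(Real.cos (n*t)) + b^2*n^2 + b^2*(Real.cos (n*t))^2))))))/(Real.sqrt ((a^2 + 2*a*b*(Real.cos (n*t)) + b^2*n^2 + b^2*(Real.cos (n*t))^2))^3)^2 := by
    rw [hκf]
    exact hKd.deriv.trans (by norm_num)
  have hXv : cross3 (mk3 ((-a*b*n^2*(Real.cos t)*(Real.sin (n*t)) + a*b*n*(Real.sin t)*(Real.cos (n*t)) + b^2*n^3*(Real.sin t) + b^2*n^2*(Real.cos t)*(Real.cos (n*t))*(Real.sin (n*t)) + b^2*n*(Real.sin t)*(Real.cos (n*t))^2)) ((-a*b*n^2*(Real.sin t)*(Real.sin (n*t)) - a*b*n*(Real.cos t)*(Real.cos (n*t)) - b^2*n^3*(Real.cos t) + b^2*n^2*(Real.sin t)*(Real.cos (n*t))*(Real.sin (n*t)) - b^2*n*(Real.cos t)*(Real.cos (n*t))^2)) ((a^2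 + a*b*n^2*(Real.cos (n*t)) + 2*a*b*(Real.cos (n*t)) - b^2*n^2*(Real.cos (n*t))^2 + 2*b^2*n^2 + b^2*(Real.cos (n*t))^2))) (mk3 ((-a*(Real.sin t) - b*n*(Real.cos t)*(Real.sin (n*t)) - b*(Real.sin t)*(Real.cos (n*t)))) ((a*(Real.cos t) - b*n*(Real.sin t)*(Real.sin (n*t)) + b*(Real.cos t)*(Real.cos (n*t)))) ((b*n*(Real.cos (n*t))))) = mk3 ((-a^3*(Real.cos t) - a^2*b*n^2*(Real.cos t)*(Real.cos (n*t)) + a^2*b*n*(Real.sin t)*(Real.sin (n*t)) - 3*a^2*b*(Real.cos t)*(Real.cos (n*t)) - a*b^2*n^2*(Real.cos t)*(Real.cos (n*t))^2 - 2*a*b^2*n^2*(Real.cos t) + 2*a*b^2*n*(Real.sin t)*(Real.cos (n*t))*(Real.sin (n*t)) - 3*a*b^2*(Real.cos t)*(Real.cos (n*t))^2 - b^3*n^4*(Real.cos t)*(Real.cos (n*t)) + 2*b^3*n^3*(Real.sin t)*(Real.sin (n*t)) - 2*b^3*n^2*(Real.cos t)*(Real.cos (n*t)) + b^3*n*(Real.sin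 t)*(Real.cos (n*t))^2*(Real.sin (n*t)) - b^3*(Real.cos t)*(Real.cos (n*t))^3)) ((-a^3*(Real.sin t) - a^2*b*n^2*(Real.sin t)*(Real.cos (n*t)) - a^2*b*n*(Real.cos t)*(Real.sin (n*t)) - 3*a^2*b*(Real.sin t)*(Real.cos (n*t)) - a*b^2*n^2*(Real.sin t)*(Real.cos (n*t))^2 - 2*a*b^2*n^2*(Real.sin t) - 2*a*b^2*n*(Real.cos t)*(Real.cos (n*t))*(Real.sin (n*t)) - 3*a*b^2*(Real.sin t)*(Real.cos (n*t))^2 - b^3*n^4*(Real.sin t)*(Real.cos (n*t)) - 2*b^3*n^3*(Real.cos t)*(Real.sin (n*t)) - 2*b^3*n^2*(Real.sin t)*(Real.cos (n*t)) - b^3*n*(Real.cos t)*(Real.cos (n*t))^2*(Real.sin (n*t)) - b^3*(Real.sin t)*(Real.cos (n*t))^3)) ((-a^2*b*n^2*(Real.sin (n*t)) - a*b^2*n^2*(Real.cos (n*t))*(Real.sin (n*t)) - b^3*n^4*(Real.sin (n*t)))) := by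
    have hs := Real.sin_sq_add_cos_sq t
    have hsn := Real.sin_sq_add_cos_sq (n*t)
    unfold cross3
    refine mk3_ext ?_ ?_ ?_ <;> simp only [mk3_c0, mk3_c1, mk3_c2]
    · ring
    · ring
    · linear_combination ((-a^2*b*n^2*(Real.sin (n*t)) - a*b^2*n^2*(Real.cos (n*t))*(Real.sin (n*t)) - b^3*n^4*(Real.sin (n*t)))) * hs
  have e1 : (Real.sqrt ((a^4 + 2*a^3*b*n^2*(Real.cos (n*t)) + 4*a^3*b*(Real.cos (n*t)) + a^2*b^2*n^4 + 3*a^2*b^2*n^2*(Real.cos (n*t))^2 + 4*a^2*b^2*n^2 + 6*a^2*b^2*(Real.cos (n*t))^2 + 4*a*b^3*n^4*(Real.cos (n*t)) + 8*a*b^3*n^2*(Real.cos (n*t)) + 4*a*b^3*(Real.cos (n*t))^3 + b^4*n^6 - b^4*n^4*(Real.cos (n*t))^2 + 4*b^4*n^4 - b^4*n^2*(Real.cos (n*t))^4 + 4*b^4*n^2*(Real.cos (n*t))^2 + b^4*(Real.cos (n*t))^4)) / Real.sqrt ((a^2 + 2*a*b*(Real.cos (n*t)) + b^2*n^2 + b^2*(Real.cos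 (n*t))^2)) ^ 3)⁻¹ * ((Real.sqrt ((a^4 + 2*a^3*b*n^2*(Real.cos (n*t)) + 4*a^3*b*(Real.cos (n*t)) + a^2*b^2*n^4 + 3*a^2*b^2*n^2*(Real.cos (n*t))^2 + 4*a^2*b^2*n^2 + 6*a^2*b^2*(Real.cos (n*t))^2 + 4*a*b^3*n^4*(Real.cos (n*t)) + 8*a*b^3*n^2*(Real.cos (n*t)) + 4*a*b^3*(Real.cos (n*t))^3 + b^4*n^6 - b^4*n^4*(Real.cos (n*t))^2 + 4*b^4*n^4 - b^4*n^2*(Real.cos (n*t))^4 + 4*b^4*n^2*(Real.cos (n*t))^2 + b^4*(Real.cos (n*t))^4)))⁻¹ * (Real.sqrt ((a^2 + 2*a*b*(Real.cos (n*t)) + b^2*n^2 + b^2*(Real.cos (n*t))^2)))⁻¹) = ((a^2 + 2*a*b*(Real.cos (n*t)) + b^2*n^2 + b^2*(Real.cos (n*t))^2)) / ((a^4 + 2*a^3*b*n^2*(Real.cos (n*t)) + 4*a^3*b*(Real.cos (n*t)) + a^2*b^2*n^4 + 3*a^2*b^2*n^2*(Real.cos (n*t))^2 + 4*a^2*b^2*n^2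 + 6*a^2*b^2*(Real.cos (n*t))^2 + 4*a*b^3*n^4*(Real.cos (n*t)) + 8*a*b^3*n^2*(Real.cos (n*t)) + 4*a*b^3*(Real.cos (n*t))^3 + b^4*n^6 - b^4*n^4*(Real.cos (n*t))^2 + 4*b^4*n^4 - b^4*n^2*(Real.cos (n*t))^4 + 4*b^4*n^2*(Real.cos (n*t))^2 + b^4*(Real.cos (n*t))^4)) :=
    c1_clean _ _ _ _ hsw2 hsq2 hsw0 hsq0
  have hc2v : c₂ = -((((-2*a^3*b*n^3*(Real.sin (n*t)) - 4*a^3*b*n*(Real.sin (n*t)) - 6*a^2*b^2*n^3*(Real.cos (n*t))*(Real.sin (n*t)) - 12*a^2*b^2*n*(Real.cos (n*t))*(Real.sin (n*t)) - 4*a*b^3*n^5*(Real.sin (n*t)) - 8*a*b^3*n^3*(Real.sin (n*t)) - 12*a*b^3*n*(Real.cos (n*t))^2*(Real.sin (n*t)) + 2*b^4*n^5*(Real.cos (n*t))*(Real.sin (n*t)) + 4*b^4*n^3*(Real.cos (n*t))^3*(Real.sin (n*t)) - 8*b^4*n^3*(Real.cos (n*t))*(Real.sin (n*t)) - 4*b^4*n*(Real.cos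 (n*t))^3*(Real.sin (n*t))))/(2*Real.sqrt ((a^4 + 2*a^3*b*n^2*(Real.cos (n*t)) + 4*a^3*b*(Real.cos (n*t)) + a^2*b^2*n^4 + 3*a^2*b^2*n^2*(Real.cos (n*t))^2 + 4*a^2*b^2*n^2 + 6*a^2*b^2*(Real.cos (n*t))^2 + 4*a*b^3*n^4*(Real.cos (n*t)) + 8*a*b^3*n^2*(Real.cos (n*t)) + 4*a*b^3*(Real.cos (n*t))^3 + b^4*n^6 - b^4*n^4*(Real.cos (n*t))^2 + 4*b^4*n^4 - b^4*n^2*(Real.cos (n*t))^4 + 4*b^4*n^2*(Real.cos (n*t))^2 + b^4*(Real.cos (n*t))^4)))*Real.sqrt ((a^2 + 2*a*b*(Real.cos (n*t)) + b^2*n^2 + b^2*(Real.cos (n*t))^2))^3 - Real.sqrt ((a^4 + 2*a^3*b*n^2*(Real.cos (n*t)) + 4*a^3*b*(Real.cos (n*t)) + a^2*b^2*n^4 + 3*a^2*b^2*n^2*(Real.cos (n*t))^2 + 4*a^2*b^2*n^2 + 6*a^2*b^2*(Real.cos (n*t))^2 + 4*a*b^3*n^4*(Real.cos (n*t)) + 8*a*b^3*n^2*(Real.cos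 (n*t)) + 4*a*b^3*(Real.cos (n*t))^3 + b^4*n^6 - b^4*n^4*(Real.cos (n*t))^2 + 4*b^4*n^4 - b^4*n^2*(Real.cos (n*t))^4 + 4*b^4*n^2*(Real.cos (n*t))^2 + b^4*(Real.cos (n*t))^4))*(3*Real.sqrt ((a^2 + 2*a*b*(Real.cos (n*t)) + b^2*n^2 + b^2*(Real.cos (n*t))^2))^2*(((-2*a*b*n*(Real.sin (n*t)) - 2*b^2*n*(Real.cos (n*t))*(Real.sin (n*t))))/(2*Real.sqrt ((a^2 + 2*a*b*(Real.cos (n*t)) + b^2*n^2 + b^2*(Real.cos (n*t))^2))))))/(Real.sqrt ((a^2 + 2*a*b*(Real.cos (n*t)) + b^2*n^2 + b^2*(Real.cos (n*t))^2))^3)^2) / (Real.sqrt ((a^2 + 2*a*b*(Real.cos (n*t)) + b^2*n^2 + b^2*(Real.cos (n*t))^2)) * (Real.sqrt ((a^4 + 2*a^3*b*n^2*(Real.cos (n*t)) + 4*a^3*b*(Real.cos (n*t)) + a^2*b^2*n^4 + 3*a^2*b^2*n^2*(Real.cos (n*t))^2 + 4*a^2*b^2*n^2 + 6*a^2*b^2*(Real.cos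 (n*t))^2 + 4*a*b^3*n^4*(Real.cos (n*t)) + 8*a*b^3*n^2*(Real.cos (n*t)) + 4*a*b^3*(Real.cos (n*t))^3 + b^4*n^6 - b^4*n^4*(Real.cos (n*t))^2 + 4*b^4*n^4 - b^4*n^2*(Real.cos (n*t))^4 + 4*b^4*n^2*(Real.cos (n*t))^2 + b^4*(Real.cos (n*t))^4))/Real.sqrt ((a^2 + 2*a*b*(Real.cos (n*t)) + b^2*n^2 + b^2*(Real.cos (n*t))^2))^3)^2 * (((-a^2*b*n^3*(Real.cos (n*t)) + a^2*b*n*(Real.cos (n*t)) - a*b^2*n^5 + 4*a*b^2*n^3*(Real.cos (n*t))^2 - 2*a*b^2*n^3 + 2*a*b^2*n*(Real.cos (n*t))^2 + 2*b^3*n^5*(Real.cos (n*t)) - b^3*n^3*(Real.cos (n*t))^3 + 4*b^3*n^3*(Real.cos (n*t)) + b^3*n*(Real.cos (n*t))^3))/((a^4 + 2*a^3*b*n^2*(Real.cos (n*t)) + 4*a^3*b*(Real.cos (n*t)) + a^2*b^2*n^4 + 3*a^2*b^2*n^2*(Real.cos (n*t))^2 + 4*a^2*b^2*n^2 + 6*a^2*b^2*(Real.cos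 (n*t))^2 + 4*a*b^3*n^4*(Real.cos (n*t)) + 8*a*b^3*n^2*(Real.cos (n*t)) + 4*a*b^3*(Real.cos (n*t))^3 + b^4*n^6 - b^4*n^4*(Real.cos (n*t))^2 + 4*b^4*n^4 - b^4*n^2*(Real.cos (n*t))^4 + 4*b^4*n^2*(Real.cos (n*t))^2 + b^4*(Real.cos (n*t))^4)))) := by
    rw [hc₂, hκderiv, (hd1 t).deriv, hng t, hκt, hτt]
  have e2 : c₂ * (Real.sqrt ((a^4 + 2*a^3*b*n^2*(Real.cos (n*t)) + 4*a^3*b*(Real.cos (n*t)) + a^2*b^2*n^4 + 3*a^2*b^2*n^2*(Real.cos (n*t))^2 + 4*a^2*b^2*n^2 + 6*a^2*b^2*(Real.cos (n*t))^2 + 4*a*b^3*n^4*(Real.cos (n*t)) + 8*a*b^3*n^2*(Real.cos (n*t)) + 4*a*b^3*(Real.cos (n*t))^3 + b^4*n^6 - b^4*n^4*(Real.cos (n*t))^2 + 4*b^4*n^4 - b^4*n^2*(Real.cos (n*t))^4 + 4*b^4*n^2*(Real.cos (n*t))^2 + b^4*(Real.cos (n*t))^4)))⁻¹ = (3 * ((a^4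 + 2*a^3*b*n^2*(Real.cos (n*t)) + 4*a^3*b*(Real.cos (n*t)) + a^2*b^2*n^4 + 3*a^2*b^2*n^2*(Real.cos (n*t))^2 + 4*a^2*b^2*n^2 + 6*a^2*b^2*(Real.cos (n*t))^2 + 4*a*b^3*n^4*(Real.cos (n*t)) + 8*a*b^3*n^2*(Real.cos (n*t)) + 4*a*b^3*(Real.cos (n*t))^3 + b^4*n^6 - b^4*n^4*(Real.cos (n*t))^2 + 4*b^4*n^4 - b^4*n^2*(Real.cos (n*t))^4 + 4*b^4*n^2*(Real.cos (n*t))^2 + b^4*(Real.cos (n*t))^4)) * ((-2*a*b*n*(Real.sin (n*t)) - 2*b^2*n*(Real.cos (n*t))*(Real.sin (n*t)))) - ((-2*a^3*b*n^3*(Real.sin (n*t)) - 4*a^3*b*n*(Real.sin (n*t)) - 6*a^2*b^2*n^3*(Real.cos (n*t))*(Real.sin (n*t)) - 12*a^2*b^2*n*(Real.cos (n*t))*(Real.sin (n*t)) - 4*a*b^3*n^5*(Real.sin (n*t)) - 8*a*b^3*n^3*(Real.sin (n*t)) - 12*a*b^3*n*(Real.cos (n*t))^2*(Real.sin (n*t))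 + 2*b^4*n^5*(Real.cos (n*t))*(Real.sin (n*t)) + 4*b^4*n^3*(Real.cos (n*t))^3*(Real.sin (n*t)) - 8*b^4*n^3*(Real.cos (n*t))*(Real.sin (n*t)) - 4*b^4*n*(Real.cos (n*t))^3*(Real.sin (n*t)))) * ((a^2 + 2*a*b*(Real.cos (n*t)) + b^2*n^2 + b^2*(Real.cos (n*t))^2))) / (2 * ((a^4 + 2*a^3*b*n^2*(Real.cos (n*t)) + 4*a^3*b*(Real.cos (n*t)) + a^2*b^2*n^4 + 3*a^2*b^2*n^2*(Real.cos (n*t))^2 + 4*a^2*b^2*n^2 + 6*a^2*b^2*(Real.cos (n*t))^2 + 4*a*b^3*n^4*(Real.cos (n*t)) + 8*a*b^3*n^2*(Real.cos (n*t)) + 4*a*b^3*(Real.cos (n*t))^3 + b^4*n^6 - b^4*n^4*(Real.cos (n*t))^2 + 4*b^4*n^4 - b^4*n^2*(Real.cos (n*t))^4 + 4*b^4*n^2*(Real.cos (n*t))^2 + b^4*(Real.cos (n*t))^4)) * ((-a^2*b*n^3*(Real.cos (n*t)) + a^2*b*n*(Real.cos (n*t)) - a*b^2*n^5 + 4*a*b^2*n^3*(Real.cos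 (n*t))^2 - 2*a*b^2*n^3 + 2*a*b^2*n*(Real.cos (n*t))^2 + 2*b^3*n^5*(Real.cos (n*t)) - b^3*n^3*(Real.cos (n*t))^3 + 4*b^3*n^3*(Real.cos (n*t)) + b^3*n*(Real.cos (n*t))^3))) :=
    c2_clean _ _ _ _ _ _ _ _ hsw2 hsq2 hsw0 hsq0 hdet0 hc2v
  have hbnD : b * n * D = -(4 * ((-a^2*b*n^3*(Real.cos (n*t)) + a^2*b*n*(Real.cos (n*t)) - a*b^2*n^5 + 4*a*b^2*n^3*(Real.cos (n*t))^2 - 2*a*b^2*n^3 + 2*a*b^2*n*(Real.cos (n*t))^2 + 2*b^3*n^5*(Real.cos (n*t)) - b^3*n^3*(Real.cos (n*t))^3 + 4*b^3*n^3*(Real.cos (n*t)) + b^3*n*(Real.cos (n*t))^3))) := by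
    rw [hD, Real.cos_two_mul, Real.cos_three_mul]
    ring
  rw [hγ t, hN, hB, hT, hc₁, (hd1 t).deriv, (hd2 t).deriv, hwv t, hng t, hnw t, hκt,
    cross3_smul, hXv, smul_smul, smul_smul, e1, e2, smul_mk3, smul_mk3, mk3_add, mk3_add,
    Real.cos_two_mul (n*t)]
  have hs := Real.sin_sq_add_cos_sq t
  have hsn := Real.sin_sq_add_cos_sq (n*t)
  refine mk3_ext ?_ ?_ ?_
  · exact key hW0 hdet0 hD0 hbnD (aux_F0 a b n (Real.cos t) (Real.sin t) (Real.cos (n*t)) (Real.sin (n*t)) hs hsn)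
  · exact key hW0 hdet0 hD0 hbnD (aux_F1 a b n (Real.cos t) (Real.sin t) (Real.cos (n*t)) (Real.sin (n*t)) hs hsn)
  · exact key hW0 hdet0 hD0 hbnD (aux_F2 a b n (Real.cos t) (Real.sin t) (Real.cos (n*t)) (Real.sin (n*t)) hs hsn)
end
end
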